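/- arXiv:1107.4442 — 2 statements merged into one kernel-verified Lean document; each statement's English description precedes it below -/
import Mathlib

section
/- Each equivalence class of rotor configurations on G contains exactly one acyclic (equivalently, recurrent) rotor configuration; the unique acyclic configuration equivalent to ρ is eρ, where e is the identity element of the sandpile group S(G/T). -/
open Function

/-- A strongly connected finite directed multigraph (self-loops and multiple arcs
allowed), given by source and head maps `src, head : E → V`, together with a nonempty
target set `T` and a rotor mechanism at each vertex: `next` is a cyclic ordering of
the arcs emanating from each vertex (it permutes the arcs, preserves the source, and
acts transitively on the arcs emanating from any fixed vertex). -/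
structure RotorSystem (V E : Type) [Fintype V] [DecidableEq V] [Fintype E]
    [DecidableEq E] where
  src : E → V
  head : E → V
  T : Finset V
  T_nonempty : T.Nonempty
  strongly_connected : ∀ v w : V,
    Relation.ReflTransGen (fun a b => ∃ e : E, src e = a ∧ head e = b) v w
  next : E → E
  next_src : ∀ e, src (next e) = src e
  next_bijective : Function.Bijective next
  next_cyclic : ∀ e e', src e = src e' → ∃ k : ℕ, next^[k] e = e'

namespace RotorSystem

variable {V E : Type} [Fintype V] [DecidableEq V] [Fintype E] [DecidableEq E]

/-- The set `V₀ = V - T` of non-target vertices. -/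
abbrev V0 (S : RotorSystem V E) : Type := {v : V // v ∉ S.T}

/-- A rotor configuration: each non-target vertex carries an arc emanating from it. -/
abbrev RConf (S : RotorSystem V E) : Type :=
  {ρ : S.V0 → E // ∀ v : S.V0, S.src (ρ v) = v.1}

/-- A particle configuration: a number of particles at each non-target vertex. -/
abbrev PConf (S : RotorSystem V E) : Type := S.V0 → ℕ

variable (S : RotorSystem V E)

/-- One step of a single particle's rotor walk: at a non-target vertex the rotor is
first progressed and the particle then moves along the new rotor arc; target vertices
absorb the particle. -/
def step (p : V × S.RConf) : V × S.RConf :=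
  if h : p.1 ∈ S.T then p
  else
    (S.head (S.next (p.2.1 ⟨p.1, h⟩)),
      ⟨Function.update p.2.1 ⟨p.1, h⟩ (S.next (p.2.1 ⟨p.1, h⟩)), by
        intro w
        rcases eq_or_ne w ⟨p.1, h⟩ with rfl | hw
        · rw [Function.update_self, S.next_src]
          exact p.2.2 ⟨p.1, h⟩
        · rw [Function.update_of_ne hw]
          exact p.2.2 w⟩)

open Classical in
/-- Route a single particle from `x` by rotor walk until it first reaches the target
set; the result is the pair (final position, final rotor configuration). -/
noncomputable def route (x : V) (ρ : S.RConf) : V × S.RConf :=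
  if h : ∃ n, (S.step^[n] (x, ρ)).1 ∈ S.T then S.step^[Nat.find h] (x, ρ) else (x, ρ)

/-- `t_x(ρ)`: the target vertex reached by a single particle started at `x` with
initial rotor configuration `ρ`. -/
noncomputable def tgt (x : V) (ρ : S.RConf) : V := (S.route x ρ).1

/-- The particle addition operator `E_v`: add one particle at `v` and route it to the
target set. -/
noncomputable def addAt (v : S.V0) (ρ : S.RConf) : S.RConf := (S.route v.1 ρ).2

/-- The action `σρ` of a particle configuration on a rotor configuration: place
`σ v` particles at each vertex `v` and route them all to the target set. -/
noncomputable def act (σ : S.PConf) (ρ : S.RConf) : S.RConf :=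
  (Finset.univ : Finset S.V0).toList.foldr (fun v r => (S.addAt v)^[σ v] r) ρ

/-- Equivalence of rotor configurations: `ρ ≡ ρ'` iff `σρ = σρ'` for some particle
configuration `σ`. -/
def REquiv (ρ ρ' : S.RConf) : Prop := ∃ σ : S.PConf, S.act σ ρ = S.act σ ρ'

/-- The outdegree `d(v)`. -/
def outdeg (v : V) : ℕ := (Finset.univ.filter fun e : E => S.src e = v).card

/-- The number `d(v,w)` of arcs from `v` to `w`. -/
def numArcs (v w : V) : ℕ :=
  (Finset.univ.filter fun e : E => S.src e = v ∧ S.head e = w).card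

/-- A particle configuration is stable if every non-target vertex holds at most
`d(v) - 1` particles. -/
def IsStable (σ : S.PConf) : Prop := ∀ v : S.V0, σ v < S.outdeg v.1

/-- Parallel toppling: every unstable vertex topples once, sending one particle along
each arc emanating from it. -/
def toppleStep (σ : S.PConf) : S.PConf := fun v =>
  (if S.outdeg v.1 ≤ σ v then σ v - S.outdeg v.1 else σ v) +
    ∑ w : S.V0, (if S.outdeg w.1 ≤ σ w then S.numArcs w.1 v.1 else 0)

open Classical in
/-- The stabilization `σ°` of a particle configuration. -/
noncomputable def stabilize (σ : S.PConf) : S.PConf :=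
  if h : ∃ n, S.IsStable (S.toppleStep^[n] σ) then S.toppleStep^[Nat.find h] σ else σ

/-- A stable particle configuration is recurrent if it is reachable (by adding
particles and stabilizing) from every particle configuration.  The recurrent
configurations form the sandpile group `S(G/T)` under addition-then-stabilization. -/
def IsRecurrent (τ : S.PConf) : Prop :=
  S.IsStable τ ∧ ∀ σ : S.PConf, ∃ τ' : S.PConf, τ = S.stabilize (τ' + σ)

/-- `e` is the identity element of the sandpile group `S(G/T)`. -/
def IsSandpileIdentity (e : S.PConf) : Prop :=
  S.IsRecurrent e ∧ ∀ τ : S.PConf, S.IsRecurrent τ → S.stabilize (e + τ) = τ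

/-- The rotor arcs of `ρ`, as a relation on vertices. -/
def rotorRel (ρ : S.RConf) (a b : V) : Prop :=
  ∃ h : a ∉ S.T, S.head (ρ.1 ⟨a, h⟩) = b

/-- A rotor configuration is acyclic if its rotor arcs contain no directed cycle. -/
def IsAcyclicConf (ρ : S.RConf) : Prop :=
  ∀ v : V, ¬ Relation.TransGen (S.rotorRel ρ) v v

/-- `ρ'` is obtained from `ρ` by pushing a cycle: there are distinct non-target
vertices `v_0, …, v_{r-1}` with the rotor arc of `v_j` pointing to `v_{j+1}`
(cyclically); each such rotor is regressed one step, other rotors are unchanged. -/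
def IsCyclePush (ρ ρ' : S.RConf) : Prop :=
  ∃ r : ℕ, 0 < r ∧ ∃ f : ZMod r → S.V0, Function.Injective f ∧
    (∀ j : ZMod r, S.head (ρ.1 (f j)) = (f (j + 1)).1) ∧
    (∀ j : ZMod r, S.next (ρ'.1 (f j)) = ρ.1 (f j)) ∧
    (∀ v : S.V0, v ∉ Set.range f → ρ'.1 v = ρ.1 v)


/-! ### Multiparticle routing framework -/

/-- A multiparticle state: chips on non-target vertices, plus a rotor configuration. -/
abbrev St (S : RotorSystem V E) : Type := (S.V0 → ℕ) × S.RConf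

/-- Move one chip at `v`: progress the rotor, send the chip along the new arc. -/
def moveAt (v : S.V0) (s : S.St) : S.St :=
  ((fun u => (s.1 u - if u = v then 1 else 0) +
      if S.head (S.next (s.2.1 v)) = u.1 then 1 else 0),
   ⟨Function.update s.2.1 v (S.next (s.2.1 v)), by
      intro w
      rcases eq_or_ne w v with rfl | hw
      · rw [Function.update_self, S.next_src]; exact s.2.2 w
      · rw [Function.update_of_ne hw]; exact s.2.2 w⟩)

def run (l : List S.V0) (s : S.St) : S.St := l.foldl (fun t v => S.moveAt v t) s

def Valid : List S.V0 → S.St → Prop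
  | [], _ => True
  | v :: l, s => 1 ≤ s.1 v ∧ Valid l (S.moveAt v s)

@[simp] lemma run_nil (s : S.St) : S.run [] s = s := rfl

@[simp] lemma run_cons (v : S.V0) (l : List S.V0) (s : S.St) :
    S.run (v :: l) s = S.run l (S.moveAt v s) := rfl

@[simp] lemma valid_nil (s : S.St) : S.Valid [] s := by simp [Valid]

@[simp] lemma valid_cons (v : S.V0) (l : List S.V0) (s : S.St) :
    S.Valid (v :: l) s ↔ 1 ≤ s.1 v ∧ S.Valid l (S.moveAt v s) := by simp [Valid]

lemma run_append (l₁ l₂ : List S.V0) (s : S.St) :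
    S.run (l₁ ++ l₂) s = S.run l₂ (S.run l₁ s) := List.foldl_append ..

lemma valid_append {l₁ l₂ : List S.V0} {s : S.St} :
    S.Valid (l₁ ++ l₂) s ↔ S.Valid l₁ s ∧ S.Valid l₂ (S.run l₁ s) := by
  induction l₁ generalizing s with
  | nil => simp
  | cons v l ih => simp [ih, and_assoc]

lemma rotor_moveAt (v u : S.V0) (s : S.St) :
    (S.moveAt v s).2.1 u = if u = v then S.next (s.2.1 v) else s.2.1 u := by
  rcases eq_or_ne u v with rfl | h
  · simp [moveAt]
  · simp only [moveAt]
    rw [Function.update_of_ne h, if_neg h]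

lemma chips_moveAt (v u : S.V0) (s : S.St) :
    (S.moveAt v s).1 u = (s.1 u - if u = v then 1 else 0) +
      if S.head (S.next (s.2.1 v)) = u.1 then 1 else 0 := rfl

lemma rotor_run (l : List S.V0) (s : S.St) (u : S.V0) :
    (S.run l s).2.1 u = S.next^[l.count u] (s.2.1 u) := by
  induction l generalizing s with
  | nil => simp
  | cons v l ih =>
    rw [run_cons, ih, List.count_cons]
    rcases eq_or_ne v u with rfl | h
    · simp [rotor_moveAt, Function.iterate_succ_apply]
    · simp [rotor_moveAt, (Ne.symm h), h]
      split_ifs with hh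
      · exact absurd (Subtype.ext hh) h
      · rfl

/-- Number of chips sent from `w` to `v` during the first `k` rotor moves at `w`,
relative to the initial rotor configuration `ρ`. -/
def arr (ρ : S.RConf) (w v : S.V0) (k : ℕ) : ℕ :=
  ((Finset.range k).filter fun i => S.head (S.next^[i + 1] (ρ.1 w)) = v.1).card

lemma arr_succ (ρ : S.RConf) (w v : S.V0) (k : ℕ) :
    S.arr ρ w v (k + 1) = S.arr ρ w v k +
      if S.head (S.next^[k + 1] (ρ.1 w)) = v.1 then 1 else 0 := by
  unfold arr
  rw [Finset.range_add_one, Finset.filter_insert]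
  split <;> simp [Finset.card_insert_of_notMem, -Function.iterate_succ]

lemma chips_run (l : List S.V0) (s : S.St) (hv : S.Valid l s) (u : S.V0) :
    (S.run l s).1 u + l.count u = s.1 u + ∑ w, S.arr s.2 w u (l.count w) := by
  induction l using List.reverseRecOn generalizing u with
  | nil => simp [arr, -Function.iterate_succ]
  | append_singleton l a ih =>
    rw [valid_append] at hv
    have h1 : 1 ≤ (S.run l s).1 a := hv.2.1
    have hrot : (S.run l s).2.1 a = S.next^[l.count a] (s.2.1 a) := S.rotor_run l s a
    set t := S.run l s with ht
    have hM : S.run (l ++ [a]) s = S.moveAt a t := by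
      rw [run_append]; rfl
    have hmv : (S.moveAt a t).1 u = (t.1 u - if u = a then 1 else 0) +
        if S.head (S.next^[l.count a + 1] (s.2.1 a)) = u.1 then 1 else 0 := by
      rw [S.chips_moveAt a u t, hrot, Function.iterate_succ_apply']
    have hcnt : ∀ (w b : S.V0), (l ++ [b]).count w = l.count w + if w = b then 1 else 0 := by
      intro w b
      rcases eq_or_ne w b with rfl | h
      · simp
      · simp [h, List.count_singleton', List.count_singleton, Ne.symm h, Subtype.coe_ne_coe.2 (Ne.symm h)]
    have hsum : ∑ w, S.arr s.2 w u ((l ++ [a]).count w) =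
        (∑ w, S.arr s.2 w u (l.count w)) +
          (if S.head (S.next^[l.count a + 1] (s.2.1 a)) = u.1 then 1 else 0) := by
      have : ∀ w : S.V0, S.arr s.2 w u ((l ++ [a]).count w) = S.arr s.2 w u (l.count w) +
          (if w = a then (if S.head (S.next^[l.count a + 1] (s.2.1 a)) = u.1 then 1 else 0)
            else 0) := by
        intro w
        rw [hcnt w a]
        rcases eq_or_ne w a with rfl | h
        · simp [arr_succ]
        · simp [h]
      rw [Finset.sum_congr rfl fun w _ => this w, Finset.sum_add_distrib,
        Finset.sum_ite_eq' Finset.univ a]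
      simp
    have ihu := ih hv.1 u
    rw [hM, hsum, hcnt u a, hmv]
    rcases eq_or_ne u a with rfl | h
    · rw [if_pos rfl]
      omega
    · rw [if_neg h]
      omega

/-! ### Linearity and confluence -/

lemma moveAt_add (v : S.V0) (s : S.St) (c₀ : S.V0 → ℕ) (h : 1 ≤ s.1 v) :
    S.moveAt v (s.1 + c₀, s.2) = ((S.moveAt v s).1 + c₀, (S.moveAt v s).2) := by
  unfold moveAt
  refine Prod.ext ?_ rfl
  funext u
  simp only [Pi.add_apply]
  rcases eq_or_ne u v with rfl | hu
  · rw [if_pos rfl]; omega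
  · rw [if_neg hu]; omega

lemma run_add (l : List S.V0) (s : S.St) (c₀ : S.V0 → ℕ) (hv : S.Valid l s) :
    S.Valid l (s.1 + c₀, s.2) ∧
      S.run l (s.1 + c₀, s.2) = ((S.run l s).1 + c₀, (S.run l s).2) := by
  induction l generalizing s with
  | nil => simp
  | cons v l ih =>
    rw [valid_cons] at hv
    have h1 : 1 ≤ (s.1 + c₀) v := le_trans hv.1 (by simp)
    have hmv := S.moveAt_add v s c₀ hv.1
    obtain ⟨ihv, ihr⟩ := ih (S.moveAt v s) hv.2
    constructor
    · rw [valid_cons]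
      refine ⟨h1, ?_⟩
      rw [hmv]
      exact ihv
    · rw [run_cons, run_cons, hmv, ihr]

lemma moveAt_comm {u v : S.V0} (s : S.St) (huv : u ≠ v)
    (hu : 1 ≤ s.1 u) (hv : 1 ≤ s.1 v) :
    S.moveAt v (S.moveAt u s) = S.moveAt u (S.moveAt v s) := by
  have hru : (S.moveAt u s).2.1 v = s.2.1 v := by
    rw [rotor_moveAt, if_neg (Ne.symm huv)]
  have hrv : (S.moveAt v s).2.1 u = s.2.1 u := by
    rw [rotor_moveAt, if_neg huv]
  refine Prod.ext ?_ ?_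
  · funext w
    rw [chips_moveAt, chips_moveAt, chips_moveAt, chips_moveAt, hru, hrv]
    rcases eq_or_ne w u with rfl | hwu
    · rw [if_neg huv, if_pos rfl]
      omega
    · rcases eq_or_ne w v with rfl | hwv
      · rw [if_pos rfl, if_neg (Ne.symm huv)]
        omega
      · rw [if_neg hwu, if_neg hwv]
        omega
  · refine Subtype.ext ?_
    show Function.update (S.moveAt u s).2.1 v (S.next ((S.moveAt u s).2.1 v)) =
      Function.update (S.moveAt v s).2.1 u (S.next ((S.moveAt v s).2.1 u))
    rw [hru, hrv]
    show Function.update (Function.update s.2.1 u _) v _ =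
      Function.update (Function.update s.2.1 v _) u _
    rw [Function.update_comm huv]

lemma chips_moveAt_other {u v : S.V0} (s : S.St) (huv : u ≠ v) :
    s.1 u ≤ (S.moveAt v s).1 u := by
  rw [chips_moveAt, if_neg huv]
  omega

/-- Exchange lemma: if a valid run of `l` from `s` empties all chips and a move at
`v` is possible at `s`, then there is an equally long valid run starting with `v`
with the same endpoint. -/
lemma exchange (l : List S.V0) (s : S.St) (hv : S.Valid l s)
    (hn : ∀ w, (S.run l s).1 w = 0) (v : S.V0) (h1 : 1 ≤ s.1 v) :
    ∃ l₂, S.Valid (v :: l₂) s ∧ S.run (v :: l₂) s = S.run l s ∧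
      (v :: l₂).length = l.length := by
  induction l generalizing s with
  | nil =>
    exact absurd (hn v) (by simp; omega)
  | cons u l ih =>
    rcases eq_or_ne u v with rfl | huv
    · exact ⟨l, hv, rfl, rfl⟩
    · rw [valid_cons] at hv
      have h1' : 1 ≤ (S.moveAt u s).1 v := le_trans h1 (S.chips_moveAt_other s (Ne.symm huv))
      obtain ⟨l₂, hval, hrun, hlen⟩ := ih (S.moveAt u s) hv.2 (by simpa using hn) h1'
      refine ⟨u :: l₂, ?_, ?_, by simpa using hlen⟩
      · rw [valid_cons] at hval ⊢
        refine ⟨h1, ?_⟩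
        rw [valid_cons]
        have hcomm := S.moveAt_comm s huv hv.1 h1
        refine ⟨le_trans hv.1 (S.chips_moveAt_other s huv), ?_⟩
        rw [← hcomm]
        exact hval.2
      · have hcomm := S.moveAt_comm s huv hv.1 h1
        calc S.run (v :: u :: l₂) s = S.run l₂ (S.moveAt u (S.moveAt v s)) := rfl
          _ = S.run l₂ (S.moveAt v (S.moveAt u s)) := by rw [← hcomm]
          _ = S.run (u :: l) s := hrun

/-- Uniqueness of the normal form: two valid runs from the same state that both
empty all chips end in the same state. -/
lemma normal_unique (n : ℕ) (l l' : List S.V0) (s : S.St) (hlen : l.length = n)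
    (hv : S.Valid l s) (hn : ∀ w, (S.run l s).1 w = 0)
    (hv' : S.Valid l' s) (hn' : ∀ w, (S.run l' s).1 w = 0) :
    S.run l s = S.run l' s := by
  induction n generalizing l l' s with
  | zero =>
    rw [List.length_eq_zero_iff] at hlen
    subst hlen
    cases l' with
    | nil => rfl
    | cons u t =>
      rw [valid_cons] at hv'
      exact absurd (hn u) (by simp; omega)
  | succ n ihn =>
    cases l with
    | nil => simp at hlen
    | cons u t =>
      rw [valid_cons] at hv
      obtain ⟨l₂, hval, hrun, hll⟩ := S.exchange l' s hv' hn' u hv.1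
      rw [valid_cons] at hval
      rw [← hrun]
      have := ihn t l₂ (S.moveAt u s) (by simpa using hlen) hv.2
        (by simpa using hn) hval.2 (by rw [← run_cons, hrun]; exact hn')
      rw [run_cons, run_cons, this]

/-! ### Bridging single-particle routing with the multiparticle framework -/

lemma step_absorbed {p : V × S.RConf} (h : p.1 ∈ S.T) : S.step p = p := dif_pos h

lemma iterate_absorbed {p : V × S.RConf} {n : ℕ} (h : (S.step^[n] p).1 ∈ S.T) :
    ∀ m, n ≤ m → S.step^[m] p = S.step^[n] p := by
  intro m hm
  obtain ⟨j, rfl⟩ := Nat.exists_eq_add_of_le hm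
  clear hm
  induction j with
  | zero => rfl
  | succ j ih =>
    rw [show n + (j + 1) = (n + j) + 1 from rfl, Function.iterate_succ_apply', ih]
    exact S.step_absorbed h

lemma set_infinite_fiber {β : Type*} [Finite β] (s : Set ℕ) (hs : s.Infinite)
    (f : ℕ → β) : ∃ b, {n | n ∈ s ∧ f n = b}.Infinite := by
  by_contra hno
  push_neg at hno
  have : s ⊆ ⋃ b, {n | n ∈ s ∧ f n = b} := fun n hn => Set.mem_iUnion.2 ⟨f n, hn, rfl⟩
  exact hs (Set.Finite.subset (Set.finite_iUnion hno) this)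

lemma route_terminates' (x : V) (ρ : S.RConf) : ∃ n, (S.step^[n] (x, ρ)).1 ∈ S.T := by
  by_contra hterm
  push_neg at hterm
  set p : ℕ → V × S.RConf := fun n => S.step^[n] (x, ρ) with hp
  set pos : ℕ → V := fun n => (p n).1 with hpos
  have hnotT : ∀ n, pos n ∉ S.T := hterm
  have hstep : ∀ n, p (n + 1) = S.step (p n) := fun n => Function.iterate_succ_apply' _ _ _
  -- the set of infinitely visited vertices
  set W : Set V := {v | {n | pos n = v}.Infinite} with hW
  have hWne : ∃ v, v ∈ W := by
    obtain ⟨y, hy⟩ := Finite.exists_infinite_fiber pos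
    exact ⟨y, Set.infinite_coe_iff.1 hy⟩
  -- W is closed under arcs
  have hclose : ∀ v ∈ W, ∀ a : E, S.src a = v → S.head a ∈ W := by
    intro v hv a hsrc_a
    have hvT : v ∉ S.T := by
      obtain ⟨n, hn⟩ := hv.nonempty
      exact hn ▸ hnotT n
    set rv : ℕ → E := fun n => (p n).2.1 ⟨v, hvT⟩ with hrv
    have hsrc_rv : ∀ n, S.src (rv n) = v := fun n => (p n).2.2 ⟨v, hvT⟩
    have hA : ∀ n, pos n = v → rv (n + 1) = S.next (rv n) ∧
        pos (n + 1) = S.head (S.next (rv n)) := by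
      intro n hn
      have hsub : (⟨pos n, hnotT n⟩ : S.V0) = ⟨v, hvT⟩ := Subtype.ext hn
      have h1 : p (n + 1) = S.step (p n) := hstep n
      rw [step, dif_neg (hnotT n)] at h1
      constructor
      · rw [hrv]
        show (p (n+1)).2.1 ⟨v, hvT⟩ = _
        rw [h1]
        show Function.update (p n).2.1 ⟨(p n).1, _⟩ (S.next ((p n).2.1 ⟨(p n).1, _⟩)) ⟨v, hvT⟩ = _
        rw [show (⟨(p n).1, _⟩ : S.V0) = ⟨v, hvT⟩ from Subtype.ext hn]
        rw [Function.update_self]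
      · show (p (n+1)).1 = _
        rw [h1]
        show S.head (S.next ((p n).2.1 ⟨(p n).1, _⟩)) = _
        rw [show (⟨(p n).1, _⟩ : S.V0) = ⟨v, hvT⟩ from Subtype.ext hn]
    have hB : ∀ n, pos n ≠ v → rv (n + 1) = rv n := by
      intro n hn
      have h1 : p (n + 1) = S.step (p n) := hstep n
      rw [step, dif_neg (hnotT n)] at h1
      rw [hrv]
      show (p (n+1)).2.1 ⟨v, hvT⟩ = _
      rw [h1]
      show Function.update (p n).2.1 ⟨(p n).1, _⟩ (S.next ((p n).2.1 ⟨(p n).1, _⟩)) ⟨v, hvT⟩ = _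
      rw [Function.update_of_ne (fun hh => hn (Subtype.ext_iff.1 hh).symm)]
    set I : E → Set ℕ := fun b => {n | pos n = v ∧ S.next (rv n) = b} with hI
    have hvisit : {n | pos n = v}.Infinite := hv
    -- some arc has infinite I
    have hI0 : ∃ b, (I b).Infinite := by
      obtain ⟨b, hb⟩ := set_infinite_fiber {n | pos n = v} hvisit (fun n => S.next (rv n))
      exact ⟨b, hb⟩
    -- I is closed under `next`
    have hInext : ∀ b, (I b).Infinite → (I (S.next b)).Infinite := by
      intro b hb
      have hnext_visit : ∀ n : ℕ, ∃ m, n < m ∧ pos m = v := by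
        intro n
        obtain ⟨m, hm, hmn⟩ := hvisit.exists_gt n
        exact ⟨m, hmn, hm⟩
      set nx : ℕ → ℕ := fun n => Nat.find (hnext_visit n) with hnx
      have hnx_spec : ∀ n, n < nx n ∧ pos (nx n) = v := fun n => Nat.find_spec (hnext_visit n)
      have hnx_min : ∀ n m, n < m → pos m = v → nx n ≤ m := by
        intro n m h1 h2
        exact Nat.find_le ⟨h1, h2⟩
      -- rotor stays constant strictly between visits
      have hconst : ∀ n, n ∈ I b → ∀ j, n + 1 ≤ j → j ≤ nx n → rv j = S.next (rv n) := by
        intro n hn j hj1 hj2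
        induction j with
        | zero => omega
        | succ j ihj =>
          rcases Nat.lt_or_ge (n + 1) (j + 1) with hlt | hge
          · have hj : rv j = S.next (rv n) := ihj (by omega) (by omega)
            rw [← hj]
            apply hB
            intro hpj
            have := hnx_min n j (by omega) hpj
            omega
          · have : n + 1 = j + 1 := by omega
            rw [← this]
            exact (hA n hn.1).1
      have hmap : ∀ n ∈ I b, nx n ∈ I (S.next b) := by
        intro n hn
        refine ⟨(hnx_spec n).2, ?_⟩
        have := hconst n hn (nx n) (by have := (hnx_spec n).1; omega) (le_refl _)
        rw [this, hn.2]
      have hinj : Set.InjOn nx (I b) := by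
        intro n₁ h₁ n₂ h₂ hne
        by_contra hcon
        rcases lt_or_gt_of_ne hcon with hlt | hlt
        · have := hnx_min n₁ n₂ hlt h₂.1
          have := (hnx_spec n₂).1
          omega
        · have := hnx_min n₂ n₁ hlt h₁.1
          have := (hnx_spec n₁).1
          omega
      have himg := hb.image hinj
      exact himg.mono (by rintro k ⟨n, hn, rfl⟩; exact hmap n hn)
    have hIiter : ∀ k b, (I b).Infinite → (I (S.next^[k] b)).Infinite := by
      intro k
      induction k with
      | zero => exact fun b hb => hb
      | succ k ihk =>
        intro b hb
        rw [Function.iterate_succ_apply']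
        exact hInext _ (ihk b hb)
    -- every arc at v has infinite I
    obtain ⟨b₀, hb₀⟩ := hI0
    have hsrc_b₀ : S.src b₀ = v := by
      obtain ⟨n, hn⟩ := hb₀.nonempty
      rw [← hn.2, S.next_src]
      exact hsrc_rv n
    obtain ⟨k, hk⟩ := S.next_cyclic b₀ a (by rw [hsrc_b₀, hsrc_a])
    have hIa : (I a).Infinite := by
      rw [← hk]
      exact hIiter k b₀ hb₀
    -- so head a is visited infinitely often
    have : {n | pos n = S.head a}.Infinite := by
      have hadd_inj : Set.InjOn (fun n : ℕ => n + 1) (I a) := fun a1 _ a2 _ h => by simpa using h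
      have himg := hIa.image hadd_inj
      refine himg.mono ?_
      rintro j ⟨n, hn, rfl⟩
      show pos (n + 1) = S.head a
      rw [(hA n hn.1).2, hn.2]
    exact this
  -- follow a path from an infinitely visited vertex to the target set
  obtain ⟨v₀, hv₀⟩ := hWne
  obtain ⟨t, ht⟩ := S.T_nonempty
  have hall : ∀ w : V, Relation.ReflTransGen
      (fun a b => ∃ e : E, S.src e = a ∧ S.head e = b) v₀ w → w ∈ W := by
    intro w hw
    induction hw with
    | refl => exact hv₀
    | tail _ hedge ih =>
      obtain ⟨a, ha1, ha2⟩ := hedge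
      rw [← ha2]
      exact hclose _ ih a ha1
  have htW : t ∈ W := hall t (S.strongly_connected v₀ t)
  obtain ⟨n, hn⟩ := htW.nonempty
  exact hnotT n (hn ▸ ht)

/-- Termination of the rotor walk. -/
lemma route_terminates (x : V) (ρ : S.RConf) : ∃ n, (S.step^[n] (x, ρ)).1 ∈ S.T :=
  S.route_terminates' x ρ

lemma route_eq {x : V} {ρ : S.RConf} {k : ℕ} (hk : (S.step^[k] (x, ρ)).1 ∈ S.T) :
    S.route x ρ = S.step^[k] (x, ρ) := by
  unfold route
  split
  · next h => exact (S.iterate_absorbed (Nat.find_spec h) k (Nat.find_le hk)).symm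
  · next h => exact absurd ⟨k, hk⟩ h

/-- One chip at `x` (as a chip configuration on `V₀`). -/
def chipsAt (x : V) : S.V0 → ℕ := fun u => if (u : V) = x then 1 else 0

lemma chipsAt_T {x : V} (hx : x ∈ S.T) : S.chipsAt x = 0 :=
  funext fun u => if_neg (fun h => u.2 (by rw [h]; exact hx))

lemma step_list (k : ℕ) (p : V × S.RConf) (hk : (S.step^[k] p).1 ∈ S.T) :
    ∃ l, S.Valid l (S.chipsAt p.1, p.2) ∧
      S.run l (S.chipsAt p.1, p.2) = (0, (S.step^[k] p).2) := by
  induction k generalizing p with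
  | zero =>
    simp only [Function.iterate_zero_apply] at hk ⊢
    exact ⟨[], by simp, by rw [run_nil, S.chipsAt_T hk]⟩
  | succ k ih =>
    by_cases hp : p.1 ∈ S.T
    · rw [Function.iterate_succ_apply, S.step_absorbed hp] at hk ⊢
      exact ih p hk
    · rw [Function.iterate_succ_apply] at hk ⊢
      obtain ⟨l', hval, hrun⟩ := ih (S.step p) hk
      have hmv : S.moveAt ⟨p.1, hp⟩ (S.chipsAt p.1, p.2) =
          (S.chipsAt (S.step p).1, (S.step p).2) := by
        refine Prod.ext ?_ ?_
        · funext u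
          rw [chips_moveAt]
          show (S.chipsAt p.1 u - if u = ⟨p.1, hp⟩ then 1 else 0) +
            (if S.head (S.next (p.2.1 ⟨p.1, hp⟩)) = u.1 then 1 else 0) = _
          have h1 : S.chipsAt p.1 u = if u = ⟨p.1, hp⟩ then 1 else 0 := by
            unfold chipsAt
            rcases eq_or_ne u ⟨p.1, hp⟩ with rfl | h
            · rw [if_pos rfl, if_pos rfl]
            · rw [if_neg h, if_neg (fun hh => h (Subtype.ext hh))]
          have h2 : (S.step p).1 = S.head (S.next (p.2.1 ⟨p.1, hp⟩)) := by
            rw [step, dif_neg hp]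
          rw [h1, h2]
          unfold chipsAt
          rcases eq_or_ne u ⟨p.1, hp⟩ with rfl | h
          · simp [eq_comm]
          · rw [if_neg h]
            simp [eq_comm]
        · refine Subtype.ext ?_
          show Function.update p.2.1 ⟨p.1, hp⟩ (S.next (p.2.1 ⟨p.1, hp⟩)) = ((S.step p).2 : S.V0 → E)
          rw [step, dif_neg hp]
      exact ⟨⟨p.1, hp⟩ :: l',
        by rw [valid_cons, hmv]; exact ⟨by simp [chipsAt], hval⟩,
        by rw [run_cons, hmv, hrun]⟩

lemma addAt_list (v : S.V0) (ρ : S.RConf) :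
    ∃ l, S.Valid l (S.chipsAt v.1, ρ) ∧
      S.run l (S.chipsAt v.1, ρ) = (0, S.addAt v ρ) := by
  obtain ⟨k, hk⟩ := S.route_terminates v.1 ρ
  obtain ⟨l, hval, hrun⟩ := S.step_list k (v.1, ρ) hk
  refine ⟨l, hval, ?_⟩
  rw [hrun, addAt, S.route_eq hk]

lemma addAt_iter_list (k : ℕ) (v : S.V0) (ρ : S.RConf) :
    ∃ l, S.Valid l ((fun u => if u = v then k else 0), ρ) ∧
      S.run l ((fun u => if u = v then k else 0), ρ) = (0, (S.addAt v)^[k] ρ) := by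
  induction k generalizing ρ with
  | zero =>
    refine ⟨[], by simp, ?_⟩
    rw [run_nil]
    congr 1
    funext u
    simp
  | succ k ih =>
    obtain ⟨l₁, hval₁, hrun₁⟩ := S.addAt_list v ρ
    have hadd := S.run_add l₁ (S.chipsAt v.1, ρ) (fun u => if u = v then k else 0) hval₁
    have hchips : S.chipsAt v.1 + (fun u => if u = v then k else 0) =
        (fun u => if u = v then k + 1 else 0) := by
      funext u
      unfold chipsAt
      rcases eq_or_ne u v with rfl | h
      · simp [chipsAt]
        omega
      · have hne : ¬ (u : V) = (v : V) := fun hh => h (Subtype.ext hh)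
        simp [chipsAt, h, hne]
    rw [hchips] at hadd
    rw [hrun₁] at hadd
    obtain ⟨l₂, hval₂, hrun₂⟩ := ih (S.addAt v ρ)
    refine ⟨l₁ ++ l₂, ?_, ?_⟩
    · rw [valid_append]
      refine ⟨hadd.1, ?_⟩
      rw [hadd.2]
      simpa using hval₂
    · rw [run_append, hadd.2]
      have : ((0 : S.V0 → ℕ) + fun u => if u = v then k else 0) =
          (fun u => if u = v then k else 0) := by
        funext u; simp
      rw [this, hrun₂, Function.iterate_succ_apply]

lemma act_list (σ : S.PConf) (ρ : S.RConf) :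
    ∃ l, S.Valid l (σ, ρ) ∧ S.run l (σ, ρ) = (0, S.act σ ρ) := by
  have key : ∀ vs : List S.V0, ∀ ρ : S.RConf,
      ∃ l, S.Valid l ((fun u => vs.count u * σ u), ρ) ∧
        S.run l ((fun u => vs.count u * σ u), ρ) =
          (0, vs.foldr (fun v r => (S.addAt v)^[σ v] r) ρ) := by
    intro vs
    induction vs with
    | nil =>
      intro ρ
      refine ⟨[], by simp, ?_⟩
      rw [run_nil]
      congr 1
      funext u
      simp
    | cons v vs ih =>
      intro ρ
      obtain ⟨l₁, hval₁, hrun₁⟩ := ih ρ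
      have hadd := S.run_add l₁ ((fun u => vs.count u * σ u), ρ)
        (fun u => if u = v then σ v else 0) hval₁
      have hchips : ((fun u => vs.count u * σ u) + fun u => if u = v then σ v else 0) =
          (fun u => (v :: vs).count u * σ u) := by
        funext u
        simp only [Pi.add_apply, List.count_cons]
        rcases eq_or_ne u v with rfl | h
        · simp [Nat.add_mul]
        · simp [h, Ne.symm h, Subtype.coe_ne_coe.2 (Ne.symm h)]
      rw [hchips, hrun₁] at hadd
      obtain ⟨l₂, hval₂, hrun₂⟩ := S.addAt_iter_list (σ v) v
        (vs.foldr (fun v r => (S.addAt v)^[σ v] r) ρ)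
      refine ⟨l₁ ++ l₂, ?_, ?_⟩
      · rw [valid_append]
        refine ⟨hadd.1, ?_⟩
        rw [hadd.2]
        have : ((0 : S.V0 → ℕ) + fun u => if u = v then σ v else 0) =
            (fun u => if u = v then σ v else 0) := by
          funext u; simp
        rw [this]
        exact hval₂
      · rw [run_append, hadd.2]
        have : ((0 : S.V0 → ℕ) + fun u => if u = v then σ v else 0) =
            (fun u => if u = v then σ v else 0) := by
          funext u; simp
        rw [this, hrun₂]
        rfl
  obtain ⟨l, hval, hrun⟩ := key (Finset.univ : Finset S.V0).toList ρ
  have hcnt : (fun u => ((Finset.univ : Finset S.V0).toList.count u) * σ u) = σ := by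
    funext u
    rw [List.count_eq_one_of_mem (Finset.nodup_toList _) (by simp), one_mul]
  rw [hcnt] at hval hrun
  exact ⟨l, hval, hrun⟩

/-- The rotor configuration reached by any valid chip-emptying run is `act`. -/
lemma run_eq_act {σ : S.PConf} {ρ : S.RConf} {l : List S.V0}
    (hval : S.Valid l (σ, ρ)) (hrun : ∀ w, (S.run l (σ, ρ)).1 w = 0) :
    (S.run l (σ, ρ)).2 = S.act σ ρ := by
  obtain ⟨l', hval', hrun'⟩ := S.act_list σ ρ
  have := S.normal_unique l.length l l' (σ, ρ) rfl hval hrun hval' (by rw [hrun']; simp)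
  rw [this, hrun']

/-! ### The rotor orbit at a vertex -/

lemma src_iterate (a : E) (k : ℕ) : S.src (S.next^[k] a) = S.src a := by
  induction k with
  | zero => rfl
  | succ k ih => rw [Function.iterate_succ_apply', S.next_src, ih]

lemma exists_period (a : E) : ∃ p, 0 < p ∧ S.next^[p] a = a := by
  set d := S.outdeg (S.src a) with hd
  have hmaps : ∀ i ∈ Finset.range (d + 1),
      S.next^[i] a ∈ Finset.univ.filter (fun e : E => S.src e = S.src a) := by
    intro i _
    simp [S.src_iterate]
  obtain ⟨i, hi, j, hj, hij, hfij⟩ :=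
    Finset.exists_ne_map_eq_of_card_lt_of_maps_to
      (by rw [Finset.card_range]; exact Nat.lt_succ_of_le (Nat.le_of_eq rfl)) hmaps
  have key : ∀ i j : ℕ, i < j → S.next^[i] a = S.next^[j] a →
      ∃ p, 0 < p ∧ S.next^[p] a = a := by
    intro i j hlt heq
    refine ⟨j - i, by omega, ?_⟩
    have : S.next^[i] (S.next^[j - i] a) = S.next^[i] a := by
      rw [← Function.iterate_add_apply, show i + (j - i) = j by omega, ← heq]
    exact (S.next_bijective.1.iterate i) this
  rcases lt_or_gt_of_ne hij with h | h
  · exact key i j h hfij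
  · exact key j i h hfij.symm

open Classical in
lemma orbit_key (a : E) :
    S.next^[S.outdeg (S.src a)] a = a ∧
      ∀ w : V, ((Finset.range (S.outdeg (S.src a))).filter
          fun i => S.head (S.next^[i + 1] a) = w).card = S.numArcs (S.src a) w := by
  set d := S.outdeg (S.src a) with hd
  have hp := S.exists_period a
  set P := Nat.find hp with hP
  obtain ⟨hPpos, hPfix⟩ : 0 < P ∧ S.next^[P] a = a := Nat.find_spec hp
  have hmod : ∀ k, S.next^[k] a = S.next^[k % P] a := by
    intro k
    conv_lhs => rw [← Nat.mod_add_div k P]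
    rw [Function.iterate_add_apply, Function.iterate_mul, Function.iterate_fixed hPfix]
  have hperiod_inj : ∀ i j, i < j → j < P → S.next^[i] a ≠ S.next^[j] a := by
    intro i j hlt hjP heq
    have : S.next^[i] (S.next^[j - i] a) = S.next^[i] a := by
      rw [← Function.iterate_add_apply, show i + (j - i) = j by omega, ← heq]
    have hfix := (S.next_bijective.1.iterate i) this
    exact (Nat.find_min hp (m := j - i) (by omega)) ⟨by omega, hfix⟩
  have hsurj : ∀ b : E, S.src b = S.src a → ∃ k < P, S.next^[k] a = b := by
    intro b hb
    obtain ⟨k, hk⟩ := S.next_cyclic a b hb.symm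
    exact ⟨k % P, Nat.mod_lt _ hPpos, by rw [← hmod, hk]⟩
  have hPd : P = d := by
    have hinj : Set.InjOn (fun i => S.next^[i] a) (Finset.range P) := by
      intro i hi j hj hij
      simp only [Finset.coe_range, Set.mem_Iio] at hi hj
      rcases lt_trichotomy i j with h | h | h
      · exact absurd hij (hperiod_inj i j h hj)
      · exact h
      · exact absurd hij.symm (hperiod_inj j i h hi)
    have himg : (Finset.range P).image (fun i => S.next^[i] a) =
        Finset.univ.filter (fun e : E => S.src e = S.src a) := by
      apply Finset.Subset.antisymm
      · intro b hb
        simp only [Finset.mem_image] at hb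
        obtain ⟨i, _, rfl⟩ := hb
        simp [S.src_iterate]
      · intro b hb
        simp only [Finset.mem_filter] at hb
        obtain ⟨k, hkP, hk⟩ := hsurj b hb.2
        simp only [Finset.mem_image]
        exact ⟨k, Finset.mem_range.2 hkP, hk⟩
    have := Finset.card_image_of_injOn hinj
    rw [himg] at this
    simp only [Finset.card_range] at this
    rw [hd, outdeg, ← this]
  constructor
  · rw [← hPd]; exact hPfix
  · intro w
    rw [numArcs]
    have hfilter : Finset.univ.filter (fun e : E => S.src e = S.src a ∧ S.head e = w) =
        (Finset.univ.filter (fun e : E => S.src e = S.src a)).filter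
          (fun e => S.head e = w) := by
      rw [Finset.filter_filter]
    rw [hfilter]
    apply Finset.card_bij (fun i _ => S.next^[i + 1] a)
    · intro i hi
      simp only [Finset.mem_filter, Finset.mem_range] at hi ⊢
      exact ⟨by simp [S.src_iterate, S.next_src], hi.2⟩
    · intro i hi j hj hij
      simp only [Finset.mem_filter, Finset.mem_range] at hi hj
      by_contra hne
      have key : ∀ i j, i < j → j < d → S.next^[i + 1] a = S.next^[j + 1] a → False := by
        intro i j hlt hjd heq
        have : S.next^[i + 1] (S.next^[j - i] a) = S.next^[i + 1] a := by
          rw [← Function.iterate_add_apply, show i + 1 + (j - i) = j + 1 by omega, ← heq]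
        have hfix := (S.next_bijective.1.iterate (i + 1)) this
        exact (Nat.find_min hp (m := j - i) (by omega)) ⟨by omega, hfix⟩
      rcases lt_or_gt_of_ne hne with h | h
      · exact key i j h hj.1 hij
      · exact key j i h hi.1 hij.symm
    · intro b hb
      simp only [Finset.mem_filter] at hb
      obtain ⟨k, hkP, hk⟩ := hsurj b hb.1.2
      rcases Nat.eq_zero_or_pos k with rfl | hkpos
      · rw [Function.iterate_zero_apply] at hk
        refine ⟨d - 1, ?_, ?_⟩
        · simp only [Finset.mem_filter, Finset.mem_range]
          have hd1 : d - 1 + 1 = d := by omega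
          refine ⟨by omega, ?_⟩
          rw [hd1, ← hPd, hPfix, hk]
          exact hb.2
        · have hd1 : d - 1 + 1 = d := by omega
          rw [hd1, ← hPd, hPfix]
          exact hk
      · refine ⟨k - 1, ?_, ?_⟩
        · simp only [Finset.mem_filter, Finset.mem_range]
          have hk1 : k - 1 + 1 = k := by omega
          rw [hk1, hk]
          exact ⟨by omega, hb.2⟩
        · have hk1 : k - 1 + 1 = k := by omega
          rw [hk1, hk]

lemma iterate_outdeg_fix (a : E) : S.next^[S.outdeg (S.src a)] a = a := (S.orbit_key a).1

lemma iterate_mul_outdeg_fix (a : E) (n : ℕ) : S.next^[n * S.outdeg (S.src a)] a = a := by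
  induction n with
  | zero => simp
  | succ n ih =>
    rw [Nat.succ_mul, Function.iterate_add_apply, S.iterate_outdeg_fix, ih]

lemma arr_add_d (ρ : S.RConf) (w v : S.V0) (k : ℕ) :
    S.arr ρ w v (k + S.outdeg w.1) = S.arr ρ w v k + S.numArcs w.1 v.1 := by
  set d := S.outdeg w.1 with hd
  unfold arr
  have hsplit : Finset.range (k + d) = Finset.range k ∪ (Finset.range d).image (k + ·) := by
    ext i
    simp only [Finset.mem_union, Finset.mem_range, Finset.mem_image]
    constructor
    · intro h
      rcases lt_or_ge i k with h' | h'
      · exact Or.inl h'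
      · exact Or.inr ⟨i - k, by omega, by omega⟩
    · rintro (h | ⟨j, hj, rfl⟩) <;> omega
  rw [hsplit, Finset.filter_union, Finset.card_union_of_disjoint, Finset.filter_image,
    Finset.card_image_of_injOn (fun i _ j _ h => by omega)]
  · congr 1
    have ha : S.src (S.next^[k] (ρ.1 w)) = w.1 := by rw [S.src_iterate]; exact ρ.2 w
    have hok := (S.orbit_key (S.next^[k] (ρ.1 w))).2 v.1
    rw [ha] at hok
    rw [← hok]
    apply Finset.card_bij (fun i _ => i)
    · intro i hi
      simp only [Finset.mem_filter, Finset.mem_range] at hi ⊢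
      refine ⟨hi.1, ?_⟩
      rw [← Function.iterate_add_apply, show i + 1 + k = k + i + 1 by omega]
      exact hi.2
    · intro i j _ _ h; exact h
    · intro i hi
      simp only [Finset.mem_filter, Finset.mem_range] at hi ⊢
      refine ⟨i, ⟨hi.1, ?_⟩, rfl⟩
      rw [← Function.iterate_add_apply, show i + 1 + k = k + i + 1 by omega] at hi
      exact hi.2
  · refine Finset.disjoint_left.2 ?_
    intro i hi hi'
    simp only [Finset.mem_filter, Finset.mem_range, Finset.mem_image] at hi hi'
    obtain ⟨⟨j, hj, rfl⟩, -⟩ := hi'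
    omega

lemma arr_mul_d (ρ : S.RConf) (w v : S.V0) (n : ℕ) :
    S.arr ρ w v (n * S.outdeg w.1) = n * S.numArcs w.1 v.1 := by
  induction n with
  | zero => simp [arr]
  | succ n ih =>
    rw [Nat.succ_mul, Nat.succ_mul, S.arr_add_d, ih]

/-! ### Toppling as rotor moves -/

lemma valid_replicate (k : ℕ) (v : S.V0) (s : S.St) (h : k ≤ s.1 v) :
    S.Valid (List.replicate k v) s := by
  induction k generalizing s with
  | zero => simp
  | succ k ih =>
    rw [List.replicate_succ, valid_cons]
    refine ⟨by omega, ih _ ?_⟩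
    rw [chips_moveAt, if_pos rfl]
    have h2 : s.1 v - 1 ≤ s.1 v - 1 + (if S.head (S.next (s.2.1 v)) = v.1 then 1 else 0) :=
      Nat.le_add_right _ _
    omega

lemma count_replicate (k : ℕ) (v u : S.V0) :
    (List.replicate k v).count u = if u = v then k else 0 := by
  induction k with
  | zero => simp
  | succ k ih =>
    rw [List.replicate_succ]
    rcases eq_or_ne u v with rfl | h
    · simp [List.count_cons, ih]
    · simp [List.count_cons, ih, h, Ne.symm h]

lemma topple_one (v : S.V0) (s : S.St) (h : S.outdeg v.1 ≤ s.1 v) :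
    S.Valid (List.replicate (S.outdeg v.1) v) s ∧
      (S.run (List.replicate (S.outdeg v.1) v) s).2 = s.2 ∧
      ∀ u, (S.run (List.replicate (S.outdeg v.1) v) s).1 u +
          (if u = v then S.outdeg v.1 else 0) = s.1 u + S.numArcs v.1 u.1 := by
  set d := S.outdeg v.1 with hd
  set l := List.replicate d v with hl
  have hval : S.Valid l s := S.valid_replicate d v s h
  refine ⟨hval, ?_, ?_⟩
  · refine Subtype.ext (funext fun u => ?_)
    show (S.run l s).2.1 u = s.2.1 u
    rw [rotor_run, hl, S.count_replicate]
    rcases eq_or_ne u v with rfl | hne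
    · rw [if_pos rfl]
      have hsrc : S.src (s.2.1 u) = u.1 := s.2.2 u
      rw [hd, ← hsrc]
      exact S.iterate_outdeg_fix (s.2.1 u)
    · rw [if_neg hne]
      rfl
  · intro u
    have hcr := S.chips_run l s hval u
    rw [hl, S.count_replicate] at hcr
    have hsum : ∑ w, S.arr s.2 w u ((List.replicate d v).count w) = S.numArcs v.1 u.1 := by
      rw [Finset.sum_eq_single v]
      · rw [S.count_replicate, if_pos rfl]
        have : d = 1 * S.outdeg v.1 := by omega
        rw [this, S.arr_mul_d, one_mul]
      · intro w _ hw
        rw [S.count_replicate, if_neg hw]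
        simp [arr, -Function.iterate_succ]
      · simp
    rw [hsum] at hcr
    rw [← hcr]

open Classical in
lemma topple_list (σ : S.PConf) (ρ : S.RConf) :
    ∃ l, S.Valid l (σ, ρ) ∧ S.run l (σ, ρ) = (S.toppleStep σ, ρ) := by
  have key : ∀ vs : List S.V0, vs.Nodup → ∀ s : S.St, s.2 = ρ →
      (∀ u ∈ vs, S.outdeg u.1 ≤ σ u → S.outdeg u.1 ≤ s.1 u) →
      ∃ l, S.Valid l s ∧ (S.run l s).2 = ρ ∧
        ∀ u, (S.run l s).1 u +
            (if u ∈ vs ∧ S.outdeg u.1 ≤ σ u then S.outdeg u.1 else 0) =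
          s.1 u + ∑ w ∈ vs.toFinset.filter (fun w => S.outdeg w.1 ≤ σ w),
            S.numArcs w.1 u.1 := by
    intro vs
    induction vs with
    | nil =>
      intro _ s hs _
      refine ⟨[], by simp, by simpa using hs, fun u => by simp⟩
    | cons v vs ih =>
      intro hnd s hs hge
      have hvnot : v ∉ vs := (List.nodup_cons.1 hnd).1
      by_cases hU : S.outdeg v.1 ≤ σ v
      · have hdv : S.outdeg v.1 ≤ s.1 v := hge v (by simp) hU
        obtain ⟨hval₁, hrot₁, hchips₁⟩ := S.topple_one v s hdv
        set s₁ := S.run (List.replicate (S.outdeg v.1) v) s with hs₁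
        have hge₂ : ∀ u ∈ vs, S.outdeg u.1 ≤ σ u → S.outdeg u.1 ≤ s₁.1 u := by
          intro u hu hUu
          have h1 := hchips₁ u
          rw [if_neg (by rintro rfl; exact hvnot hu)] at h1
          have := hge u (List.mem_cons_of_mem v hu) hUu
          omega
        obtain ⟨l₂, hval₂, hrot₂, hchips₂⟩ := ih (List.nodup_cons.1 hnd).2 s₁
          (by rw [hs₁, hrot₁, hs]) hge₂
        refine ⟨List.replicate (S.outdeg v.1) v ++ l₂, ?_, ?_, ?_⟩
        · rw [valid_append]; exact ⟨hval₁, hval₂⟩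
        · rw [run_append]
          rw [show S.run (List.replicate (S.outdeg v.1) v) s = s₁ from rfl]
          exact hrot₂
        · intro u
          rw [run_append, ← hs₁]
          have h2 := hchips₂ u
          have h1 := hchips₁ u
          have hsplit : (if u ∈ v :: vs ∧ S.outdeg u.1 ≤ σ u then S.outdeg u.1 else 0) =
              (if u = v then S.outdeg v.1 else 0) +
              (if u ∈ vs ∧ S.outdeg u.1 ≤ σ u then S.outdeg u.1 else 0) := by
            rcases eq_or_ne u v with rfl | hne
            · rw [if_pos ⟨List.mem_cons_self, hU⟩, if_pos rfl,
                if_neg (fun hc => hvnot hc.1)]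
              omega
            · have hmm : (u ∈ v :: vs ∧ S.outdeg u.1 ≤ σ u) ↔
                  (u ∈ vs ∧ S.outdeg u.1 ≤ σ u) := by
                simp [List.mem_cons, hne]
              rw [if_congr hmm rfl rfl, if_neg hne, Nat.zero_add]
          have hsumsplit : ∑ w ∈ (v :: vs).toFinset.filter (fun w => S.outdeg w.1 ≤ σ w),
              S.numArcs w.1 u.1 = S.numArcs v.1 u.1 +
              ∑ w ∈ vs.toFinset.filter (fun w => S.outdeg w.1 ≤ σ w), S.numArcs w.1 u.1 := by
            rw [List.toFinset_cons, Finset.filter_insert, if_pos hU,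
              Finset.sum_insert (by simp [hvnot])]
          rw [hsplit, hsumsplit]
          omega
      · obtain ⟨l₂, hval₂, hrot₂, hchips₂⟩ := ih (List.nodup_cons.1 hnd).2 s hs
          (fun u hu => hge u (List.mem_cons_of_mem v hu))
        refine ⟨l₂, hval₂, hrot₂, fun u => ?_⟩
        have h2 := hchips₂ u
        have hcond : (u ∈ v :: vs ∧ S.outdeg u.1 ≤ σ u) ↔ (u ∈ vs ∧ S.outdeg u.1 ≤ σ u) := by
          constructor
          · rintro ⟨h1, h2'⟩
            rcases List.mem_cons.1 h1 with rfl | h1'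
            · exact absurd h2' hU
            · exact ⟨h1', h2'⟩
          · exact fun ⟨h1, h2'⟩ => ⟨List.mem_cons_of_mem v h1, h2'⟩
        have hfil : (v :: vs).toFinset.filter (fun w => S.outdeg w.1 ≤ σ w) =
            vs.toFinset.filter (fun w => S.outdeg w.1 ≤ σ w) := by
          rw [List.toFinset_cons, Finset.filter_insert, if_neg hU]
        rw [hfil]
        rw [if_congr hcond rfl rfl]
        exact h2
  obtain ⟨l, hval, hrot, hchips⟩ := key (Finset.univ : Finset S.V0).toList
    (Finset.nodup_toList _) (σ, ρ) rfl (fun u _ h => h)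
  refine ⟨l, hval, ?_⟩
  have hchips' : (S.run l (σ, ρ)).1 = S.toppleStep σ := by
    funext u
    have h := hchips u
    have hmem : u ∈ (Finset.univ : Finset S.V0).toList := by simp
    have hfin : (Finset.univ : Finset S.V0).toList.toFinset = Finset.univ := by
      simp
    rw [hfin] at h
    have hiff : (u ∈ (Finset.univ : Finset S.V0).toList ∧ S.outdeg u.1 ≤ σ u) ↔
        S.outdeg u.1 ≤ σ u := and_iff_right hmem
    rw [if_congr hiff rfl rfl] at h
    rw [toppleStep]
    have hsum : ∑ w ∈ Finset.univ.filter (fun w : S.V0 => S.outdeg w.1 ≤ σ w),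
        S.numArcs w.1 u.1 = ∑ w : S.V0, (if S.outdeg w.1 ≤ σ w then S.numArcs w.1 u.1 else 0) :=
      Finset.sum_filter _ _
    rw [hsum] at h
    have hrfl : (σ, ρ).1 u = σ u := rfl
    by_cases hU : S.outdeg u.1 ≤ σ u
    · rw [if_pos hU] at h ⊢
      omega
    · rw [if_neg hU] at h ⊢
      omega
  refine Prod.ext ?_ ?_
  · exact hchips'
  · exact hrot

lemma act_toppleStep (σ : S.PConf) (ρ : S.RConf) :
    S.act (S.toppleStep σ) ρ = S.act σ ρ := by
  obtain ⟨l₁, hval₁, hrun₁⟩ := S.topple_list σ ρ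
  obtain ⟨l₂, hval₂, hrun₂⟩ := S.act_list (S.toppleStep σ) ρ
  have hval : S.Valid (l₁ ++ l₂) (σ, ρ) := S.valid_append.2 ⟨hval₁, by rw [hrun₁]; exact hval₂⟩
  have hrun : S.run (l₁ ++ l₂) (σ, ρ) = (0, S.act (S.toppleStep σ) ρ) := by
    rw [run_append, hrun₁, hrun₂]
  have h := S.run_eq_act hval (by rw [hrun]; simp)
  rw [hrun] at h
  exact h

lemma act_toppleStep_iter (n : ℕ) (σ : S.PConf) (ρ : S.RConf) :
    S.act (S.toppleStep^[n] σ) ρ = S.act σ ρ := by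
  induction n with
  | zero => rfl
  | succ n ih => rw [Function.iterate_succ_apply', S.act_toppleStep, ih]

lemma act_stabilize (σ : S.PConf) (ρ : S.RConf) :
    S.act (S.stabilize σ) ρ = S.act σ ρ := by
  unfold stabilize
  split
  · apply act_toppleStep_iter
  · rfl

lemma act_add (σ τ : S.PConf) (ρ : S.RConf) :
    S.act (σ + τ) ρ = S.act τ (S.act σ ρ) := by
  obtain ⟨l₁, hval₁, hrun₁⟩ := S.act_list σ ρ
  have hadd := S.run_add l₁ (σ, ρ) τ hval₁
  rw [hrun₁] at hadd
  obtain ⟨l₂, hval₂, hrun₂⟩ := S.act_list τ (S.act σ ρ)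
  have hz : ((0 : S.V0 → ℕ) + τ) = τ := by funext u; simp
  have hval : S.Valid (l₁ ++ l₂) (σ + τ, ρ) := by
    rw [valid_append]
    refine ⟨hadd.1, ?_⟩
    rw [hadd.2, hz]
    exact hval₂
  have hrun : S.run (l₁ ++ l₂) (σ + τ, ρ) = (0, S.act τ (S.act σ ρ)) := by
    rw [run_append, hadd.2, hz, hrun₂]
  have h := S.run_eq_act hval (by rw [hrun]; simp)
  rw [hrun] at h
  exact h.symm

/-! ### Runs that start with chips everywhere end in acyclic configurations -/

lemma chips_le_run_of_not_mem (l : List S.V0) (s : S.St) (v : S.V0) (h : v ∉ l) :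
    s.1 v ≤ (S.run l s).1 v := by
  induction l generalizing s with
  | nil => exact le_refl _
  | cons u l ih =>
    have hvu : v ≠ u := fun hh => h (hh ▸ List.mem_cons_self (a := u) (l := l))
    exact le_trans (S.chips_moveAt_other s hvu) (ih (S.moveAt u s) (fun hh => h (List.mem_cons_of_mem u hh)))

lemma mem_of_chips_pos (l : List S.V0) (s : S.St) (v : S.V0) (h1 : 1 ≤ s.1 v)
    (hn : (S.run l s).1 v = 0) : v ∈ l := by
  by_contra h
  have := S.chips_le_run_of_not_mem l s v h
  omega

lemma last_split {α : Type*} (l : List α) (v : α) (h : v ∈ l) :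
    ∃ l₁ l₂, l = l₁ ++ v :: l₂ ∧ v ∉ l₂ := by
  induction l with
  | nil => cases h
  | cons u t ih =>
    by_cases hv : v ∈ t
    · obtain ⟨l₁, l₂, rfl, h2⟩ := ih hv
      exact ⟨u :: l₁, l₂, rfl, h2⟩
    · rcases List.mem_cons.1 h with rfl | hh
      · exact ⟨[], t, rfl, hv⟩
      · exact absurd hh hv

lemma run_acyclic (l : List S.V0) (s : S.St) (hval : S.Valid l s)
    (hn : ∀ v, (S.run l s).1 v = 0) (hpos : ∀ v : S.V0, 1 ≤ s.1 v) :
    S.IsAcyclicConf (S.run l s).2 := by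
  classical
  set ρ' := (S.run l s).2 with hρ'
  -- measure: position of the last occurrence, counted from the end
  set μ : V → ℕ := fun x => if hx : x ∉ S.T then List.idxOf (⟨x, hx⟩ : S.V0) l.reverse else 0
    with hμ
  -- edge lemma
  have edge : ∀ a b : S.V0, S.head (ρ'.1 a) = b.1 → μ b.1 < μ a.1 := by
    intro a b hab
    have hmema : a ∈ l := S.mem_of_chips_pos l s a (hpos a) (hn a)
    obtain ⟨l₁, l₂, hsplit, hnotin⟩ := last_split l a hmema
    have hval₂ : S.Valid (a :: l₂) (S.run l₁ s) := by
      rw [hsplit, valid_append] at hval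
      exact hval.2
    have h1 : 1 ≤ (S.run l₁ s).1 a := hval₂.1
    set t := S.moveAt a (S.run l₁ s) with ht
    have hrun_t : S.run (l₁ ++ [a]) s = t := by rw [run_append]; rfl
    have hfinal : S.run l s = S.run l₂ t := by
      rw [hsplit, show l₁ ++ a :: l₂ = (l₁ ++ [a]) ++ l₂ by simp, run_append, hrun_t]
    -- the rotor at `a` does not change any more
    have hrot_a : ρ'.1 a = t.2.1 a := by
      rw [hρ', hfinal, rotor_run, List.count_eq_zero_of_not_mem hnotin, Function.iterate_zero_apply]
    have hrot_a' : t.2.1 a = S.next ((S.run l₁ s).2.1 a) := by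
      rw [ht, rotor_moveAt, if_pos rfl]
    -- after the move at `a`, vertex `b` has a chip
    have hchip_b : 1 ≤ t.1 b := by
      rw [ht, chips_moveAt]
      have hhead : S.head (S.next ((S.run l₁ s).2.1 a)) = b.1 := by
        rw [← hrot_a', ← hrot_a]; exact hab
      rw [hhead, if_pos rfl]
      rcases eq_or_ne b a with rfl | hba
      · rw [if_pos rfl]; omega
      · rw [if_neg hba]; omega
    -- so `b` must be moved again later
    have hmem_b : b ∈ l₂ := by
      by_contra hb
      have hle := S.chips_le_run_of_not_mem l₂ t b hb
      have := hn b
      rw [hfinal] at this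
      omega
    -- index computation
    have hrev : l.reverse = (l₂.reverse ++ [a]) ++ l₁.reverse := by
      rw [hsplit]
      simp
    have hμa : μ a.1 = l₂.length := by
      rw [hμ]
      simp only [dif_pos a.2]
      have h2 : (⟨a.1, a.2⟩ : S.V0) = a := rfl
      rw [h2, hrev, List.idxOf_append_of_mem (by simp),
        List.idxOf_append_of_notMem (by simpa using hnotin)]
      simp
    have hμb : μ b.1 < l₂.length := by
      rw [hμ]
      simp only [dif_pos b.2]
      have h2 : (⟨b.1, b.2⟩ : S.V0) = b := rfl
      have hbmem : b ∈ l₂.reverse ++ [a] := by simp [hmem_b]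
      rw [h2, hrev, List.idxOf_append_of_mem hbmem]
      rcases eq_or_ne b a with rfl | hba
      · exact absurd hmem_b hnotin
      · rw [List.idxOf_append_of_mem (by simpa using hmem_b)]
        have := List.idxOf_lt_length_iff.2 (show b ∈ l₂.reverse by simpa using hmem_b)
        simpa using this
    omega
  -- no directed cycle
  intro x hx
  have key : ∀ p q : V, Relation.TransGen (S.rotorRel ρ') p q → q ∉ S.T →
      (p ∉ S.T) ∧ μ q < μ p := by
    intro p q hpq
    induction hpq with
    | single h =>
      intro hq
      obtain ⟨hp, hh⟩ := h
      exact ⟨hp, edge ⟨p, hp⟩ ⟨_, hq⟩ hh⟩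
    | tail hpb hbq ih =>
      intro hq
      obtain ⟨hb, hh⟩ := hbq
      obtain ⟨hp, hμ⟩ := ih hb
      exact ⟨hp, lt_trans (edge ⟨_, hb⟩ ⟨_, hq⟩ hh) hμ⟩
  cases hx with
  | single h =>
    obtain ⟨hp, hh⟩ := h
    exact absurd (edge ⟨x, hp⟩ ⟨x, hp⟩ hh) (lt_irrefl _)
  | tail htr hrel =>
    obtain ⟨hb, hh⟩ := hrel
    have hcyc := Relation.TransGen.head (⟨hb, hh⟩ : S.rotorRel ρ' _ x) htr
    obtain ⟨-, hlt⟩ := key _ _ hcyc hb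
    omega

/-! ### The greedy routing argument for acyclic configurations -/

lemma arr_window (ρ : S.RConf) (w v : S.V0) {k K : ℕ} (h : k ≤ K) :
    S.arr ρ w v K = S.arr ρ w v k +
      ((Finset.Ico k K).filter fun i => S.head (S.next^[i + 1] (ρ.1 w)) = v.1).card := by
  unfold arr
  rw [Finset.range_eq_Ico, ← Finset.Ico_union_Ico_eq_Ico (Nat.zero_le k) h,
    Finset.filter_union, Finset.card_union_of_disjoint, ← Finset.range_eq_Ico]
  refine Finset.disjoint_left.2 fun i hi hi' => ?_
  simp only [Finset.mem_filter, Finset.mem_Ico] at hi hi'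
  omega

open Classical in
lemma no_stuck (ρ : S.RConf) (hac : S.IsAcyclicConf ρ) (e m done : S.PConf)
    (He : ∀ v : S.V0, S.outdeg v.1 * m v = e v + ∑ w, m w * S.numArcs w.1 v.1)
    (hle : ∀ v, done v ≤ S.outdeg v.1 * m v)
    (hne : ∃ v, done v < S.outdeg v.1 * m v)
    (hstuck : ∀ v : S.V0, done v < S.outdeg v.1 * m v →
      done v = e v + ∑ w, S.arr ρ w v (done w)) :
    False := by
  set dm : S.V0 → ℕ := fun v => S.outdeg v.1 * m v with hdm
  set Sf := Finset.univ.filter (fun v : S.V0 => done v < dm v) with hSf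
  have hmemSf : ∀ v : S.V0, v ∈ Sf ↔ done v < dm v := by
    intro v; simp [hSf]
  have hSne : Sf.Nonempty := by
    obtain ⟨v, hv⟩ := hne
    exact ⟨v, (hmemSf v).2 hv⟩
  have hoffSf : ∀ v : S.V0, v ∉ Sf → done v = dm v := by
    intro v hv
    have h1 := hle v
    have h2 : dm v = S.outdeg v.1 * m v := rfl
    rw [hmemSf] at hv
    omega
  have hfull : ∀ v : S.V0, dm v = e v + ∑ w, S.arr ρ w v (dm w) := by
    intro v
    have : ∀ w : S.V0, S.arr ρ w v (dm w) = m w * S.numArcs w.1 v.1 := by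
      intro w
      rw [hdm]
      show S.arr ρ w v (S.outdeg w.1 * m w) = _
      rw [mul_comm (S.outdeg w.1) (m w), S.arr_mul_d]
    rw [Finset.sum_congr rfl fun w _ => this w]
    exact He v
  set cnt : S.V0 → S.V0 → ℕ := fun w v =>
    ((Finset.Ico (done w) (dm w)).filter
      fun i => S.head (S.next^[i + 1] (ρ.1 w)) = v.1).card with hcnt
  have harrw : ∀ w v : S.V0, S.arr ρ w v (dm w) = S.arr ρ w v (done w) + cnt w v :=
    fun w v => S.arr_window ρ w v (hle w)
  -- the window arrival counts are bounded by the window size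
  have hcnt_le : ∀ w : S.V0, ∑ v ∈ Sf, cnt w v ≤ dm w - done w := by
    intro w
    have hdisj : ∀ x ∈ Sf, ∀ y ∈ Sf, x ≠ y →
        Disjoint ((Finset.Ico (done w) (dm w)).filter
            fun i => S.head (S.next^[i + 1] (ρ.1 w)) = x.1)
          ((Finset.Ico (done w) (dm w)).filter
            fun i => S.head (S.next^[i + 1] (ρ.1 w)) = y.1) := by
      intro x _ y _ hxy
      refine Finset.disjoint_left.2 fun i hi hi' => ?_
      simp only [Finset.mem_filter] at hi hi'
      exact hxy (Subtype.ext (hi.2 ▸ hi'.2))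
    rw [hcnt, ← Finset.card_biUnion hdisj]
    calc (Sf.biUnion _).card ≤ (Finset.Ico (done w) (dm w)).card :=
          Finset.card_le_card (Finset.biUnion_subset.2 fun v _ => Finset.filter_subset _ _)
      _ = dm w - done w := Nat.card_Ico _ _
  -- summing the stuck equations
  have hE1 : ∑ v ∈ Sf, done v = (∑ v ∈ Sf, e v) + ∑ v ∈ Sf, ∑ w, S.arr ρ w v (done w) := by
    rw [← Finset.sum_add_distrib]
    refine Finset.sum_congr rfl fun v hv => ?_
    exact hstuck v ((hmemSf v).1 hv)
  have hE2 : ∑ v ∈ Sf, dm v = (∑ v ∈ Sf, e v) + ∑ v ∈ Sf, ∑ w, S.arr ρ w v (dm w) := by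
    rw [← Finset.sum_add_distrib]
    exact Finset.sum_congr rfl fun v _ => hfull v
  have hT2 : ∑ v ∈ Sf, ∑ w, S.arr ρ w v (dm w) =
      (∑ v ∈ Sf, ∑ w, S.arr ρ w v (done w)) + ∑ w ∈ Sf, ∑ v ∈ Sf, cnt w v := by
    rw [Finset.sum_comm, Finset.sum_comm (s := Sf) (t := Finset.univ)]
    have : ∀ w : S.V0, ∑ v ∈ Sf, S.arr ρ w v (dm w) =
        (∑ v ∈ Sf, S.arr ρ w v (done w)) + (if w ∈ Sf then ∑ v ∈ Sf, cnt w v else 0) := by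
      intro w
      by_cases hw : w ∈ Sf
      · rw [if_pos hw, ← Finset.sum_add_distrib]
        exact Finset.sum_congr rfl fun v _ => harrw w v
      · rw [if_neg hw, Nat.add_zero]
        refine Finset.sum_congr rfl fun v _ => ?_
        rw [hoffSf w hw]
    rw [Finset.sum_congr rfl fun w _ => this w, Finset.sum_add_distrib]
    congr 1
    rw [Finset.sum_ite_mem, Finset.univ_inter]
  have hR : ∑ v ∈ Sf, dm v = (∑ v ∈ Sf, done v) + ∑ v ∈ Sf, (dm v - done v) := by
    rw [← Finset.sum_add_distrib]
    refine Finset.sum_congr rfl fun v _ => ?_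
    have h1 := hle v
    have h2 : dm v = S.outdeg v.1 * m v := rfl
    omega
  have hRC : ∑ w ∈ Sf, ∑ v ∈ Sf, cnt w v = ∑ v ∈ Sf, (dm v - done v) := by
    have h1 := hE2
    rw [hT2, hR, hE1] at h1
    omega
  have hpoint : ∀ w ∈ Sf, ∑ v ∈ Sf, cnt w v = dm w - done w :=
    (Finset.sum_eq_sum_iff_of_le (fun w _ => hcnt_le w)).1 hRC
  -- each vertex of Sf has its rotor arc pointing into Sf
  have hhead : ∀ w : S.V0, w ∈ Sf → ∃ v, v ∈ Sf ∧ S.head (ρ.1 w) = v.1 := by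
    intro w hw
    have hwlt := (hmemSf w).1 hw
    have hbU : (Sf.biUnion fun v => (Finset.Ico (done w) (dm w)).filter
        (fun i => S.head (S.next^[i + 1] (ρ.1 w)) = v.1)) = Finset.Ico (done w) (dm w) := by
      apply Finset.eq_of_subset_of_card_le
        (Finset.biUnion_subset.2 fun v _ => Finset.filter_subset _ _)
      rw [Finset.card_biUnion]
      · rw [Nat.card_Ico, hpoint w hw]
      · intro x _ y _ hxy
        refine Finset.disjoint_left.2 fun i hi hi' => ?_
        simp only [Finset.mem_filter] at hi hi'
        exact hxy (Subtype.ext (hi.2 ▸ hi'.2))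
    have hi0 : dm w - 1 ∈ Finset.Ico (done w) (dm w) := by
      simp only [Finset.mem_Ico]
      omega
    rw [← hbU] at hi0
    obtain ⟨v, hv, hv'⟩ := Finset.mem_biUnion.1 hi0
    simp only [Finset.mem_filter] at hv'
    refine ⟨v, hv, ?_⟩
    have hfix : S.next^[dm w - 1 + 1] (ρ.1 w) = ρ.1 w := by
      have h1 : dm w - 1 + 1 = dm w := by omega
      rw [h1, hdm]
      show S.next^[S.outdeg w.1 * m w] (ρ.1 w) = ρ.1 w
      rw [mul_comm]
      have hsrc : S.src (ρ.1 w) = w.1 := ρ.2 w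
      rw [← hsrc]
      exact S.iterate_mul_outdeg_fix (ρ.1 w) (m w)
    rw [← hfix]
    exact hv'.2
  -- build a directed cycle inside Sf, contradicting acyclicity
  have hg : ∀ w : {x // x ∈ Sf}, ∃ v : {x // x ∈ Sf}, S.head (ρ.1 w.1) = v.1.1 := by
    intro w
    obtain ⟨v, hv, hv'⟩ := hhead w.1 w.2
    exact ⟨⟨v, hv⟩, hv'⟩
  choose g hgspec using hg
  obtain ⟨w0, hw0⟩ := hSne
  set f : ℕ → {x // x ∈ Sf} := fun n => g^[n] ⟨w0, hw0⟩ with hf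
  have hfsucc : ∀ n, f (n + 1) = g (f n) := by
    intro n
    rw [hf]
    exact Function.iterate_succ_apply' g n _
  have hedge : ∀ n, S.rotorRel ρ (f n).1.1 (f (n + 1)).1.1 := by
    intro n
    refine ⟨(f n).1.2, ?_⟩
    rw [hfsucc n]
    exact hgspec (f n)
  have hchain : ∀ n k, 1 ≤ k → Relation.TransGen (S.rotorRel ρ) (f n).1.1 (f (n + k)).1.1 := by
    intro n k hk
    induction k with
    | zero => omega
    | succ k ihk =>
      rcases Nat.eq_zero_or_pos k with rfl | hkpos
      · exact Relation.TransGen.single (hedge n)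
      · exact Relation.TransGen.tail (ihk hkpos)
          (by rw [show n + (k + 1) = (n + k) + 1 from rfl]; exact hedge (n + k))
  obtain ⟨i, j, hij, hfij⟩ := Finite.exists_ne_map_eq_of_infinite f
  have hcyc : ∀ i j : ℕ, i < j → f i = f j → False := by
    intro i j hlt heq
    have := hchain i (j - i) (by omega)
    rw [show i + (j - i) = j by omega, ← heq] at this
    exact hac _ this
  rcases lt_or_gt_of_ne hij with h | h
  · exact hcyc i j h hfij
  · exact hcyc j i h hfij.symm

lemma count_cons' (v u : S.V0) (l : List S.V0) :
    (v :: l).count u = l.count u + if u = v then 1 else 0 := by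
  rcases eq_or_ne u v with rfl | h
  · simp
  · simp [List.count_cons, h, Ne.symm h]

open Classical in
/-- For an acyclic `ρ` and a chip configuration of the form `Δ'm ≥ 0`, routing
returns `ρ` unchanged. -/
lemma act_fixed_of_acyclic (ρ : S.RConf) (hac : S.IsAcyclicConf ρ) (e m : S.PConf)
    (He : ∀ v : S.V0, S.outdeg v.1 * m v = e v + ∑ w, m w * S.numArcs w.1 v.1) :
    S.act e ρ = ρ := by
  set dm : S.V0 → ℕ := fun v => S.outdeg v.1 * m v with hdm
  have main : ∀ B : ℕ, ∀ done : S.V0 → ℕ, (∀ v, done v ≤ dm v) →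
      (∑ v, (dm v - done v)) = B →
      ∀ s : S.St, (∀ v, s.2.1 v = S.next^[done v] (ρ.1 v)) →
      (∀ v, s.1 v + done v = e v + ∑ w, S.arr ρ w v (done w)) →
      ∃ l, S.Valid l s ∧ (∀ v, (S.run l s).1 v = 0) ∧
        (∀ v, l.count v + done v = dm v) := by
    intro B
    induction B using Nat.strong_induction_on with
    | _ B ih =>
      intro done hle hsum s hrot hchips
      by_cases hB : B = 0
      · have hdone : ∀ v, done v = dm v := by
          intro v
          have h0 : dm v - done v = 0 := by
            subst hB
            exact Finset.sum_eq_zero_iff.1 hsum v (Finset.mem_univ v)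
          have := hle v
          omega
        refine ⟨[], by simp, ?_, ?_⟩
        · intro v
          rw [run_nil]
          have hc := hchips v
          have harr : ∀ w : S.V0, S.arr ρ w v (done w) = m w * S.numArcs w.1 v.1 := by
            intro w
            rw [hdone w]
            show S.arr ρ w v (S.outdeg w.1 * m w) = _
            rw [mul_comm, S.arr_mul_d]
          rw [Finset.sum_congr rfl fun w _ => harr w] at hc
          have hHe := He v
          have h2 : done v = dm v := hdone v
          have h3 : dm v = S.outdeg v.1 * m v := rfl
          omega
        · intro v
          rw [List.count_nil, Nat.zero_add]
          exact hdone v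
      · have hmv : ∃ v, done v < dm v ∧ 1 ≤ s.1 v := by
          by_contra hno
          push_neg at hno
          apply S.no_stuck ρ hac e m done He
          · intro v
            have h2 : dm v = S.outdeg v.1 * m v := rfl
            have := hle v
            omega
          · by_contra hne'
            push_neg at hne'
            apply hB
            rw [← hsum]
            refine Finset.sum_eq_zero fun v _ => ?_
            have h1 := hne' v
            have h2 : dm v = S.outdeg v.1 * m v := rfl
            omega
          · intro v hv
            have h2 : dm v = S.outdeg v.1 * m v := rfl
            have h3 := hno v (by omega)
            have hc := hchips v
            omega
        obtain ⟨v, hvlt, hv1⟩ := hmv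
        set done' : S.V0 → ℕ := fun u => if u = v then done u + 1 else done u with hdone'
        have hd'v : done' v = done v + 1 := by rw [hdone']; simp
        have hd'ne : ∀ u, u ≠ v → done' u = done u := by
          intro u h
          rw [hdone']
          simp [h]
        have hle' : ∀ u, done' u ≤ dm u := by
          intro u
          rcases eq_or_ne u v with rfl | h
          · rw [hd'v]; omega
          · rw [hd'ne u h]; exact hle u
        have hsum' : (∑ u, (dm u - done' u)) = B - 1 := by
          have hsplit : ∀ (dd : S.V0 → ℕ), (∑ u, (dm u - dd u)) =
              (∑ u ∈ Finset.univ.erase v, (dm u - dd u)) + (dm v - dd v) :=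
            fun dd => (Finset.sum_erase_add _ _ (Finset.mem_univ v)).symm
          rw [hsplit done']
          rw [hsplit done] at hsum
          have hagree : ∑ u ∈ Finset.univ.erase v, (dm u - done' u) =
              ∑ u ∈ Finset.univ.erase v, (dm u - done u) :=
            Finset.sum_congr rfl fun u hu => by rw [hd'ne u (Finset.ne_of_mem_erase hu)]
          rw [hagree, hd'v]
          omega
        set s' := S.moveAt v s with hs'
        have hrot' : ∀ u, s'.2.1 u = S.next^[done' u] (ρ.1 u) := by
          intro u
          rw [hs', rotor_moveAt]
          rcases eq_or_ne u v with rfl | h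
          · rw [if_pos rfl, hd'v, hrot u]
            exact (Function.iterate_succ_apply' S.next (done u) (ρ.1 u)).symm
          · rw [if_neg h, hd'ne u h, hrot u]
        have hchips' : ∀ u, s'.1 u + done' u = e u + ∑ w, S.arr ρ w u (done' w) := by
          intro u
          have hsum_split : ∑ w, S.arr ρ w u (done' w) =
              (∑ w, S.arr ρ w u (done w)) +
                (if S.head (S.next^[done v + 1] (ρ.1 v)) = u.1 then 1 else 0) := by
            have hw : ∀ w : S.V0, S.arr ρ w u (done' w) = S.arr ρ w u (done w) +
                (if w = v then (if S.head (S.next^[done v + 1] (ρ.1 v)) = u.1 then 1 else 0)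
                  else 0) := by
              intro w
              rcases eq_or_ne w v with rfl | h
              · rw [if_pos rfl, hd'v, S.arr_succ]
              · rw [if_neg h, hd'ne w h, Nat.add_zero]
            rw [Finset.sum_congr rfl fun w _ => hw w, Finset.sum_add_distrib,
              Finset.sum_ite_eq' Finset.univ v]
            simp
          rw [hsum_split]
          have hmv_chips : s'.1 u = (s.1 u - if u = v then 1 else 0) +
              (if S.head (S.next^[done v + 1] (ρ.1 v)) = u.1 then 1 else 0) := by
            rw [hs', chips_moveAt, hrot v,
              ← Function.iterate_succ_apply' S.next (done v) (ρ.1 v)]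
          have hc := hchips u
          rw [hmv_chips]
          rcases eq_or_ne u v with rfl | h
          · rw [if_pos rfl, hd'v]
            omega
          · rw [if_neg h, hd'ne u h]
            omega
        obtain ⟨l, hval, hn, hcount⟩ := ih (B - 1) (by omega) done' hle' hsum' s' hrot' hchips'
        refine ⟨v :: l, ?_, ?_, ?_⟩
        · rw [valid_cons]
          exact ⟨hv1, by rw [← hs']; exact hval⟩
        · intro u
          rw [run_cons, ← hs']
          exact hn u
        · intro u
          rw [S.count_cons']
          have hcu := hcount u
          rcases eq_or_ne u v with rfl | h
          · rw [hd'v] at hcu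
            rw [if_pos rfl]
            omega
          · rw [hd'ne u h] at hcu
            rw [if_neg h]
            omega
  obtain ⟨l, hval, hn, hcount⟩ := main (∑ v, (dm v - 0)) (fun _ => 0) (fun v => Nat.zero_le _)
    rfl (e, ρ) (fun v => rfl) (by intro v; simp [arr, -Function.iterate_succ])
  have hact := S.run_eq_act hval hn
  rw [← hact]
  refine Subtype.ext (funext fun v => ?_)
  show (S.run l (e, ρ)).2.1 v = ρ.1 v
  rw [rotor_run]
  have hc := hcount v
  have hcv : l.count v = m v * S.outdeg v.1 := by
    have h3 : dm v = S.outdeg v.1 * m v := rfl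
    have h4 : S.outdeg v.1 * m v = m v * S.outdeg v.1 := Nat.mul_comm _ _
    omega
  rw [hcv]
  have hsrc : S.src (ρ.1 v) = v.1 := ρ.2 v
  rw [← hsrc]
  exact S.iterate_mul_outdeg_fix (ρ.1 v) (m v)

/-! ### Extracting the toppling odometer and assembling the theorem -/

lemma topple_invariant (σ : S.PConf) (n : ℕ) :
    ∃ m : S.PConf, ∀ v, S.toppleStep^[n] σ v + S.outdeg v.1 * m v =
      σ v + ∑ w, m w * S.numArcs w.1 v.1 := by
  induction n with
  | zero => exact ⟨0, fun v => by simp⟩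
  | succ n ih =>
    obtain ⟨m, hm⟩ := ih
    set τ := S.toppleStep^[n] σ with hτ
    refine ⟨fun v => m v + (if S.outdeg v.1 ≤ τ v then 1 else 0), fun v => ?_⟩
    rw [Function.iterate_succ_apply', ← hτ]
    have hsum : ∑ w, (m w + (if S.outdeg w.1 ≤ τ w then 1 else 0)) * S.numArcs w.1 v.1 =
        (∑ w, m w * S.numArcs w.1 v.1) +
          ∑ w, (if S.outdeg w.1 ≤ τ w then S.numArcs w.1 v.1 else 0) := by
      rw [← Finset.sum_add_distrib]
      refine Finset.sum_congr rfl fun w _ => ?_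
      rcases le_or_gt (S.outdeg w.1) (τ w) with h | h
      · rw [if_pos h, if_pos h, Nat.add_mul, Nat.one_mul]
      · rw [if_neg (by omega), if_neg (by omega), Nat.add_zero, Nat.add_zero]
    show S.toppleStep τ v + S.outdeg v.1 * (m v + _) = _
    rw [hsum, toppleStep]
    have hmv := hm v
    rcases le_or_gt (S.outdeg v.1) (τ v) with h | h
    · rw [if_pos h, if_pos h, Nat.mul_add, Nat.mul_one]
      omega
    · rw [if_neg (by omega), if_neg (by omega), Nat.mul_add, Nat.mul_zero]
      omega

open Classical in
lemma stabilize_m (σ : S.PConf) :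
    ∃ m : S.PConf, ∀ v, S.stabilize σ v + S.outdeg v.1 * m v =
      σ v + ∑ w, m w * S.numArcs w.1 v.1 := by
  unfold stabilize
  split
  · exact S.topple_invariant σ _
  · exact ⟨0, fun v => by simp⟩

theorem main_theorem (e : S.PConf) (he : S.IsSandpileIdentity e) (ρ : S.RConf) :
    S.IsAcyclicConf (S.act e ρ) ∧ S.REquiv (S.act e ρ) ρ ∧
      ∀ ρ' : S.RConf, S.REquiv ρ' ρ → S.IsAcyclicConf ρ' → ρ' = S.act e ρ := by
  obtain ⟨⟨hstable, hrec⟩, hid⟩ := he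
  -- Part 1 : `act e x` is always acyclic
  obtain ⟨τ₁, hτ₁⟩ := hrec (fun _ => 1)
  have hact1 : ∀ x : S.RConf, S.act e x = S.act (τ₁ + fun _ => 1) x := by
    intro x
    rw [hτ₁]
    exact S.act_stabilize _ _
  have goal1 : ∀ x : S.RConf, S.IsAcyclicConf (S.act e x) := by
    intro x
    rw [hact1 x]
    obtain ⟨l, hval, hrun⟩ := S.act_list (τ₁ + fun _ => 1) x
    have hac := S.run_acyclic l ((τ₁ + fun _ => 1), x) hval (by rw [hrun]; simp)
      (fun v => by
        show 1 ≤ (τ₁ + fun _ => 1 : S.PConf) v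
        have h1 : (τ₁ + fun _ => 1 : S.PConf) v = τ₁ v + 1 := rfl
        omega)
    rw [hrun] at hac
    exact hac
  -- `e` is a ℕ-combination of toppling moves : `d v * m v = e v + ∑ m w numArcs w v`
  have hee : S.stabilize (e + e) = e := hid e ⟨hstable, hrec⟩
  obtain ⟨m, hm⟩ := S.stabilize_m (e + e)
  have He : ∀ v, S.outdeg v.1 * m v = e v + ∑ w, m w * S.numArcs w.1 v.1 := by
    intro v
    have h1 := hm v
    rw [hee] at h1
    have h2 : (e + e) v = e v + e v := rfl
    omega
  have goalF : ∀ x : S.RConf, S.IsAcyclicConf x → S.act e x = x := fun x hx =>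
    S.act_fixed_of_acyclic x hx e m He
  -- Part 2 : equivalence
  have goal2 : S.REquiv (S.act e ρ) ρ := by
    refine ⟨e, ?_⟩
    rw [← S.act_add]
    calc S.act (e + e) ρ = S.act (S.stabilize (e + e)) ρ := (S.act_stabilize _ _).symm
      _ = S.act e ρ := by rw [hee]
  -- Part 3 : uniqueness
  refine ⟨goal1 ρ, goal2, ?_⟩
  rintro ρ' ⟨σ, hσ⟩ hac'
  obtain ⟨τ', hτ'⟩ := hrec σ
  have hα : ∀ x : S.RConf, S.act e x = S.act τ' (S.act σ x) := by
    intro x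
    rw [hτ']
    rw [S.act_stabilize, show τ' + σ = σ + τ' from add_comm τ' σ, S.act_add]
  have h1 : S.act e ρ' = S.act e ρ := by rw [hα ρ', hα ρ, hσ]
  rw [← goalF ρ' hac', h1]
end RotorSystem

/-- **Theorem (unique acyclic configuration in each equivalence class).**
Each equivalence class of rotor configurations contains exactly one acyclic
(equivalently, recurrent) rotor configuration; the unique acyclic configuration
equivalent to `ρ` is `eρ`, where `e` is the identity of the sandpile group. -/
theorem unique_acyclic_in_class {V E : Type} [Fintype V] [DecidableEq V] [Fintype E]
    [DecidableEq E] (S : RotorSystem V E)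
    (e : S.PConf) (he : S.IsSandpileIdentity e) (ρ : S.RConf) :
    S.IsAcyclicConf (S.act e ρ) ∧ S.REquiv (S.act e ρ) ρ ∧
      ∀ ρ' : S.RConf, S.REquiv ρ' ρ → S.IsAcyclicConf ρ' → ρ' = S.act e ρ :=
  S.main_theorem e he ρ
end

section
/- For any initial rotor configuration on G, every sequence of cycle pushing moves terminates: after finitely many cycle pushing moves one reaches an acyclic rotor configuration, and no infinite sequence of cycle pushing moves exists. -/
open Function

namespace CyclePushAux

open RotorSystem

variable {V E : Type} [Fintype V] [DecidableEq V] [Fintype E] [DecidableEq E]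

/-- The rotor permutation as an `Equiv.Perm`. -/
noncomputable def N (S : RotorSystem V E) : Equiv.Perm E :=
  Equiv.ofBijective S.next S.next_bijective

lemma N_apply (S : RotorSystem V E) (e : E) : N S e = S.next e := rfl

lemma src_N_symm (S : RotorSystem V E) (e : E) : S.src ((N S).symm e) = S.src e := by
  have h := S.next_src ((N S).symm e)
  rw [← N_apply, (N S).apply_symm_apply] at h
  exact h.symm

/-- The map following the rotor arcs (identity on target vertices). -/
def Fmap (S : RotorSystem V E) (ρ : S.RConf) : V → V :=
  fun w => if h : w ∉ S.T then S.head (ρ.1 ⟨w, h⟩) else w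

lemma Fmap_of_not_mem (S : RotorSystem V E) (ρ : S.RConf) {w : V} (h : w ∉ S.T) :
    Fmap S ρ w = S.head (ρ.1 ⟨w, h⟩) := dif_pos h

lemma acyclic_no_push (S : RotorSystem V E) (ρ : S.RConf) (h : S.IsAcyclicConf ρ) :
    ¬ ∃ ρ' : S.RConf, S.IsCyclePush ρ ρ' := by
  rintro ⟨ρ', r, hr, f, hinj, hcyc, hnext, hoff⟩
  have step : ∀ j : ZMod r, S.rotorRel ρ (f j).1 (f (j + 1)).1 := fun j => ⟨(f j).2, hcyc j⟩
  have chain : ∀ k : ℕ, Relation.ReflTransGen (S.rotorRel ρ) (f 0).1 (f (k : ZMod r)).1 := by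
    intro k
    induction k with
    | zero => rw [Nat.cast_zero]
    | succ k ih =>
      have e1 : ((k + 1 : ℕ) : ZMod r) = (k : ZMod r) + 1 := by push_cast; ring
      rw [e1]
      exact ih.tail (step _)
  have htg : Relation.TransGen (S.rotorRel ρ) (f 0).1 (f 0).1 := by
    have h1 := chain (r - 1)
    have h2 := step ((r - 1 : ℕ) : ZMod r)
    have h3 : ((r - 1 : ℕ) : ZMod r) + 1 = 0 := by
      have h4 : (((r - 1) + 1 : ℕ) : ZMod r) = 0 := by
        rw [Nat.sub_add_cancel hr]; exact ZMod.natCast_self r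
      rw [Nat.cast_add, Nat.cast_one] at h4
      exact h4
    rw [h3] at h2
    exact Relation.TransGen.tail' h1 h2
  exact h (f 0).1 htg

lemma exists_push (S : RotorSystem V E) (ρ : S.RConf) (h : ¬ S.IsAcyclicConf ρ) :
    ∃ ρ' : S.RConf, S.IsCyclePush ρ ρ' := by
  classical
  simp only [RotorSystem.IsAcyclicConf, not_forall, not_not] at h
  obtain ⟨v, hv⟩ := h
  have key : ∀ {a b : V}, Relation.TransGen (S.rotorRel ρ) a b →
      ∃ m, 0 < m ∧ (Fmap S ρ)^[m] a = b ∧ ∀ i < m, (Fmap S ρ)^[i] a ∉ S.T := by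
    intro a b hab
    induction hab with
    | single h1 =>
      obtain ⟨ha, hb⟩ := h1
      refine ⟨1, one_pos, ?_, ?_⟩
      · rw [Function.iterate_one, Fmap_of_not_mem S ρ ha]; exact hb
      · intro i hi
        interval_cases i
        simpa using ha
    | tail h1 h2 ih =>
      obtain ⟨m, hm, hFm, hT⟩ := ih
      obtain ⟨hb, hc⟩ := h2
      refine ⟨m + 1, Nat.succ_pos _, ?_, ?_⟩
      · rw [Function.iterate_succ_apply', hFm, Fmap_of_not_mem S ρ hb]; exact hc
      · intro i hi
        rcases Nat.lt_succ_iff_lt_or_eq.mp hi with h | h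
        · exact hT i h
        · rw [h, hFm]; exact hb
  obtain ⟨m, hm, hFm, hT⟩ := key hv
  have allT : ∀ n, (Fmap S ρ)^[n] v ∉ S.T := by
    intro n
    induction n using Nat.strong_induction_on with
    | _ n ih =>
      rcases lt_or_ge n m with h | h
      · exact hT n h
      · have e : (Fmap S ρ)^[n] v = (Fmap S ρ)^[n - m] v := by
          conv_lhs => rw [show n = (n - m) + m by omega]
          rw [Function.iterate_add_apply, hFm]
        rw [e]; exact ih (n - m) (by omega)
  have mulper : ∀ p, (Fmap S ρ)^[p] v = v → ∀ s q, (Fmap S ρ)^[s + q * p] v = (Fmap S ρ)^[s] v := by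
    intro p hp s q
    rw [Function.iterate_add_apply, mul_comm q p, Function.iterate_mul,
      Function.iterate_fixed hp q]
  have hex : ∃ p, 0 < p ∧ (Fmap S ρ)^[p] v = v := ⟨m, hm, hFm⟩
  set r := Nat.find hex with hrdef
  obtain ⟨hr, hur⟩ := Nat.find_spec hex
  have umod : ∀ a b : ℕ, a % r = b % r → (Fmap S ρ)^[a] v = (Fmap S ρ)^[b] v := by
    intro a b hab
    have ha := Nat.mod_add_div' a r
    have hb := Nat.mod_add_div' b r
    calc (Fmap S ρ)^[a] v = (Fmap S ρ)^[a % r + a / r * r] v := by rw [ha]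
      _ = (Fmap S ρ)^[a % r] v := mulper r hur _ _
      _ = (Fmap S ρ)^[b % r] v := by rw [hab]
      _ = (Fmap S ρ)^[b % r + b / r * r] v := (mulper r hur _ _).symm
      _ = (Fmap S ρ)^[b] v := by rw [hb]
  have inj : ∀ i j, i < j → j < r → (Fmap S ρ)^[i] v ≠ (Fmap S ρ)^[j] v := by
    intro i j hij hjr heq
    have fwd : ∀ t, (Fmap S ρ)^[i + t] v = (Fmap S ρ)^[j + t] v := by
      intro t
      rw [add_comm i t, add_comm j t, Function.iterate_add_apply,
        Function.iterate_add_apply, heq]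
    have him : i ≤ i * m := Nat.le_mul_of_pos_right i hm
    have per' : (Fmap S ρ)^[j - i] v = v := by
      have e2 : (j - i) + i * m = j + (i * m - i) := by omega
      have e3 : i + (i * m - i) = 0 + i * m := by omega
      calc (Fmap S ρ)^[j - i] v = (Fmap S ρ)^[(j - i) + i * m] v := (mulper m hFm _ _).symm
        _ = (Fmap S ρ)^[j + (i * m - i)] v := by rw [e2]
        _ = (Fmap S ρ)^[i + (i * m - i)] v := (fwd _).symm
        _ = (Fmap S ρ)^[0 + i * m] v := by rw [e3]
        _ = v := mulper m hFm 0 i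
    exact Nat.find_min hex (hrdef ▸ (show j - i < r by omega)) ⟨by omega, per'⟩
  haveI : NeZero r := ⟨hr.ne'⟩
  set f : ZMod r → S.V0 := fun x => ⟨(Fmap S ρ)^[x.val] v, allT x.val⟩ with hfdef
  have hfval : ∀ x : ZMod r, (f x).1 = (Fmap S ρ)^[x.val] v := fun x => rfl
  have hfinj : Function.Injective f := by
    intro x y hxy
    have hx : x.val < r := ZMod.val_lt x
    have hy : y.val < r := ZMod.val_lt y
    have hval : (Fmap S ρ)^[x.val] v = (Fmap S ρ)^[y.val] v := congrArg Subtype.val hxy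
    have hxyv : x.val = y.val := by
      rcases lt_trichotomy x.val y.val with h | h | h
      · exact absurd hval (inj _ _ h hy)
      · exact h
      · exact absurd hval.symm (inj _ _ h hx)
    exact ZMod.val_injective r hxyv
  have hfcyc : ∀ j : ZMod r, S.head (ρ.1 (f j)) = (f (j + 1)).1 := by
    intro j
    have h1 : S.head (ρ.1 (f j)) = (Fmap S ρ)^[j.val + 1] v := by
      rw [Function.iterate_succ_apply', ← Fmap_of_not_mem S ρ (allT j.val)]
    rw [h1, hfval]
    apply umod
    have hval : (j + 1).val = (j.val + (1 : ZMod r).val) % r := ZMod.val_add j 1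
    rw [ZMod.val_one_eq_one_mod] at hval
    rw [Nat.mod_eq_of_lt (ZMod.val_lt (j + 1)), hval]
    conv_lhs => rw [Nat.add_mod, Nat.mod_eq_of_lt (ZMod.val_lt j)]
  refine ⟨⟨fun w => if w ∈ Set.range f then (N S).symm (ρ.1 w) else ρ.1 w, ?_⟩,
    r, hr, f, hfinj, hfcyc, ?_, ?_⟩
  · intro w
    dsimp only
    split_ifs with hw
    · rw [src_N_symm]; exact ρ.2 w
    · exact ρ.2 w
  · intro j
    dsimp only
    rw [if_pos ⟨j, rfl⟩, ← N_apply, (N S).apply_symm_apply]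
  · intro w hw
    dsimp only
    rw [if_neg hw]

lemma no_infinite (S : RotorSystem V E) :
    ¬ ∃ g : ℕ → S.RConf, ∀ n, S.IsCyclePush (g n) (g (n + 1)) := by
  classical
  rintro ⟨g, hg⟩
  choose r hr f hinj hcyc hnext hoff using hg
  have hupd : ∀ (n : ℕ) (v : S.V0), (g (n + 1)).1 v =
      if v ∈ Set.range (f n) then (N S).symm ((g n).1 v) else (g n).1 v := by
    intro n v
    split_ifs with h
    · obtain ⟨j, rfl⟩ := h
      exact ((N S).eq_symm_apply).mpr (hnext n j)
    · exact hoff n v h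
  set c : S.V0 → ℕ → ℕ :=
    fun v n => ((Finset.range n).filter fun k => v ∈ Set.range (f k)).card with hc
  have hstep : ∀ v n, c v (n + 1) = if v ∈ Set.range (f n) then c v n + 1 else c v n := by
    intro v n
    simp only [hc]
    rw [Finset.range_add_one, Finset.filter_insert]
    split_ifs with h
    · rw [Finset.card_insert_of_notMem (by simp)]
    · rfl
  have hform : ∀ (v : S.V0) (n : ℕ), (g n).1 v = ((N S).symm)^[c v n] ((g 0).1 v) := by
    intro v n
    induction n with
    | zero => simp [hc]
    | succ n ih =>
      rw [hupd n v, hstep v n]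
      split_ifs with h
      · rw [ih, Function.iterate_succ_apply']
      · exact ih
  have hmono : ∀ (v : S.V0) {a b : ℕ}, a ≤ b → c v a ≤ c v b := by
    intro v a b hab
    simp only [hc]
    exact Finset.card_le_card (Finset.filter_subset_filter _ (Finset.range_subset_range.mpr hab))
  have hInfEx : ∃ v : S.V0, ∀ N, ∃ n, N ≤ n ∧ v ∈ Set.range (f n) := by
    obtain ⟨v, hv⟩ := Finite.exists_infinite_fiber (fun n => f n 0)
    refine ⟨v, fun N => ?_⟩
    by_contra hcon
    push_neg at hcon
    have hsub : ((fun n => f n 0) ⁻¹' {v}) ⊆ Set.Iio N := by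
      intro n hn
      simp only [Set.mem_preimage, Set.mem_singleton_iff] at hn
      by_contra hnN
      simp only [Set.mem_Iio, not_lt] at hnN
      exact hcon n hnN ⟨0, hn⟩
    exact Set.not_infinite.mpr (Set.Finite.subset (Set.finite_Iio N) hsub)
      (Set.infinite_coe_iff.mp hv)
  have hunb : ∀ v : S.V0, (∀ N, ∃ n, N ≤ n ∧ v ∈ Set.range (f n)) →
      ∀ M, ∃ n, M ≤ c v n := by
    intro v hv M
    induction M with
    | zero => exact ⟨0, Nat.zero_le _⟩
    | succ M ih =>
      obtain ⟨n, hn⟩ := ih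
      obtain ⟨n', hn', hp⟩ := hv n
      refine ⟨n' + 1, ?_⟩
      have h1 := hstep v n'
      rw [if_pos hp] at h1
      have h2 := hmono v hn'
      omega
  have hexact : ∀ (v : S.V0) (a : ℕ), (∃ n, a + 1 ≤ c v n) →
      ∃ n, v ∈ Set.range (f n) ∧ c v n = a := by
    intro v a hgoal
    have hzero : c v 0 = 0 := by simp [hc]
    have hspec := Nat.find_spec hgoal
    have hne : Nat.find hgoal ≠ 0 := by
      intro h0; rw [h0, hzero] at hspec; omega
    obtain ⟨k, hk⟩ := Nat.exists_eq_succ_of_ne_zero hne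
    rw [Nat.succ_eq_add_one] at hk
    have hmin := Nat.find_min hgoal (show k < Nat.find hgoal by omega)
    rw [hk] at hspec
    push_neg at hmin
    have h1 := hstep v k
    by_cases hp : v ∈ Set.range (f k)
    · rw [if_pos hp] at h1; exact ⟨k, hp, by omega⟩
    · rw [if_neg hp] at h1; omega
  set m := orderOf (N S) with hmdef
  have hm : 0 < m := orderOf_pos _
  have hfix : ∀ e : E, (N S).symm^[m] e = e := by
    intro e
    have h2 : (⇑(N S))^[m] e = e := by
      rw [← Equiv.Perm.coe_pow, hmdef, pow_orderOf_eq_one]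
      rfl
    have h3 := Function.LeftInverse.iterate (N S).symm_apply_apply m e
    rw [h2] at h3
    exact h3
  have hkey : ∀ (v : S.V0), (∀ N, ∃ n, N ≤ n ∧ v ∈ Set.range (f n)) →
      ∀ e : E, S.src e = v.1 →
      ∃ h : S.head e ∉ S.T,
        ∀ N, ∃ n, N ≤ n ∧ (⟨S.head e, h⟩ : S.V0) ∈ Set.range (f n) := by
    intro v hv e he
    obtain ⟨k, hk⟩ := S.next_cyclic e ((g 0).1 v) (he.trans ((g 0).2 v).symm)
    have hek : ∀ a, (N S).symm^[k + m * a] ((g 0).1 v) = e := by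
      intro a
      have hk' : (⇑(N S))^[k] e = (g 0).1 v := hk
      have h2 : (N S).symm^[m * a] ((g 0).1 v) = (g 0).1 v := by
        rw [Function.iterate_mul]
        exact Function.iterate_fixed (hfix _) a
      rw [Function.iterate_add_apply, h2, ← hk']
      exact Function.LeftInverse.iterate (N S).symm_apply_apply k e
    have hpush : ∀ N, ∃ n, N ≤ n ∧ v ∈ Set.range (f n) ∧ (g n).1 v = e := by
      intro N
      have hm1 : c v N + 1 ≤ m * (c v N + 1) := Nat.le_mul_of_pos_left _ hm
      obtain ⟨n, hp, hcn⟩ := hexact v (k + m * (c v N + 1)) (hunb v hv _)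
      refine ⟨n, ?_, hp, ?_⟩
      · by_contra hcon
        push_neg at hcon
        have := hmono v (le_of_lt hcon)
        omega
      · rw [hform v n, hcn]
        exact hek _
    obtain ⟨n0, _, hp0, he0⟩ := hpush 0
    obtain ⟨j, hj⟩ := hp0
    have hhead : S.head e = (f n0 (j + 1)).1 := by
      have hcj := hcyc n0 j
      rw [hj, he0] at hcj
      exact hcj
    have hT' : S.head e ∉ S.T := by rw [hhead]; exact (f n0 (j + 1)).2
    refine ⟨hT', fun N => ?_⟩
    obtain ⟨n, hnN, hp, hrot⟩ := hpush N
    obtain ⟨j', hj'⟩ := hp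
    have hh := hcyc n j'
    rw [hj', hrot] at hh
    exact ⟨n, hnN, ⟨j' + 1, Subtype.ext hh.symm⟩⟩
  obtain ⟨v0, hInf⟩ := hInfEx
  obtain ⟨t, ht⟩ := S.T_nonempty
  have reach := S.strongly_connected v0.1 t
  have main : ∀ w, Relation.ReflTransGen
      (fun a b => ∃ e : E, S.src e = a ∧ S.head e = b) v0.1 w →
      ∃ h : w ∉ S.T, ∀ N, ∃ n, N ≤ n ∧ (⟨w, h⟩ : S.V0) ∈ Set.range (f n) := by
    intro w hw
    induction hw with
    | refl => exact ⟨v0.2, hInf⟩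
    | tail h1 h2 ih =>
      obtain ⟨e, he1, he2⟩ := h2
      obtain ⟨hb, hIb⟩ := ih
      subst he2
      exact hkey ⟨_, hb⟩ hIb e he1
  obtain ⟨hcon, _⟩ := main t reach
  exact hcon ht

end CyclePushAux


/-- **Lemma (cycle pushing terminates).**
There is no infinite sequence of cycle pushing moves; moreover a rotor configuration
admits a cycle pushing move if and only if it is not acyclic, so that any maximal
sequence of cycle pushing moves reaches an acyclic configuration in finitely many
steps. -/
theorem cyclePush_terminates {V E : Type} [Fintype V] [DecidableEq V] [Fintype E]
    [DecidableEq E] (S : RotorSystem V E) :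
    (¬ ∃ g : ℕ → S.RConf, ∀ n, S.IsCyclePush (g n) (g (n + 1))) ∧
    (∀ ρ : S.RConf, ¬ S.IsAcyclicConf ρ → ∃ ρ' : S.RConf, S.IsCyclePush ρ ρ') ∧
    (∀ ρ : S.RConf, S.IsAcyclicConf ρ → ¬ ∃ ρ' : S.RConf, S.IsCyclePush ρ ρ') :=
  ⟨CyclePushAux.no_infinite S, CyclePushAux.exists_push S, CyclePushAux.acyclic_no_push S⟩
end
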